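/- arXiv:2102.06188 — 5 statements merged into one kernel-verified Lean document; each statement's English description precedes it below -/
import Mathlib

section
/- Let M be a torsion 𝔽[[Y]]-module and Σ a set of nonzero elements of M spanning M as an 𝔽-vector space such that: (i) Y·Σ ⊆ Σ̃ ∪ {0}; (ii) if v₁, v₂ ∈ Σ satisfy 𝔽·Yv₁ = 𝔽·Yv₂ ≠ 0 then v₁ = v₂; (iii) Σ ∩ M[Y] is a finite set of 𝔽-linearly independent vectors. Then Σ is an 𝔽-basis of M and M[Y] is spanned over 𝔽 by Σ ∩ M[Y] (in particular M[Y] is finite-dimensional, i.e. M is an admissible 𝔽[[Y]]-module). If moreover Y·Σ̃ = Σ̃ ∪ {0}, then the dual M^∨ is a free 𝔽[[Y]]-module of rank equal to the cardinality of Σ ∩ M[Y], which equals dim_𝔽 M[Y]. (Paper: Lemma 'lem:gen:Sigma' in §3.2.4.) -/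
/-!
Setup (Lemma `lem:gen:Sigma`, §3.2.4 of the paper): `𝔽[[Y]]` is `PowerSeries 𝔽` with
variable `Y = PowerSeries.X`; `M` is an `𝔽[[Y]]`-module (with its underlying `𝔽`-vector
space structure recorded by `[Module 𝔽 M]` and `[IsScalarTower 𝔽 (PowerSeries 𝔽) M]`);
`M[Y] = {m : M | Y • m = 0}`; for a set `S` of nonzero elements,
`S̃ = {c • v : c ∈ 𝔽ˣ, v ∈ S}`; the dual `M^∨ = Hom_𝔽(M, 𝔽)` carries the `𝔽[[Y]]`-action
`(a • g) m = g (a • m)`.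
-/

namespace BHHMS

variable (𝔽 : Type*) [Field 𝔽] (M : Type*) [AddCommGroup M] [Module 𝔽 M]
  [Module (PowerSeries 𝔽) M] [IsScalarTower 𝔽 (PowerSeries 𝔽) M]

/-- `M[Y] := {m : M | Y • m = 0}`, an `𝔽`-submodule of `M`. -/
def torsionSub : Submodule 𝔽 M where
  carrier := {m : M | (PowerSeries.X : PowerSeries 𝔽) • m = 0}
  add_mem' := by
    intro a b ha hb
    simp only [Set.mem_setOf_eq, smul_add] at *
    rw [ha, hb, add_zero]
  zero_mem' := by
    simp only [Set.mem_setOf_eq, smul_zero]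
  smul_mem' := by
    intro c m hm
    simp only [Set.mem_setOf_eq] at *
    rw [smul_comm, hm, smul_zero]

/-- `S̃ := {c • v : c ∈ 𝔽ˣ, v ∈ S}`. -/
def scaled (S : Set M) : Set M := {x | ∃ c : 𝔽, c ≠ 0 ∧ ∃ v ∈ S, x = c • v}

/-- The action of `a ∈ 𝔽[[Y]]` on the `𝔽`-linear dual of `M`: `(a • g) m = g (a • m)`. -/
noncomputable def dualSMul (a : PowerSeries 𝔽) (g : M →ₗ[𝔽] 𝔽) : M →ₗ[𝔽] 𝔽 where
  toFun m := g (a • m)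
  map_add' x y := by
    show g (a • (x + y)) = g (a • x) + g (a • y)
    rw [smul_add, map_add]
  map_smul' c x := by
    show g (a • c • x) = (RingHom.id 𝔽) c • g (a • x)
    rw [smul_comm, map_smul, RingHom.id_apply]

set_option linter.unusedSectionVars false in
theorem helperInd (𝔽 : Type*) [Field 𝔽] (M : Type*) [AddCommGroup M] [Module 𝔽 M]
    [Module (PowerSeries 𝔽) M] [IsScalarTower 𝔽 (PowerSeries 𝔽) M] {ι : Type*} (T : Set M)
    (hT : LinearIndependent 𝔽 (fun x : ↥T => (x : M)))
    (s : Finset ι) (f : ι → M) (c : ι → 𝔽)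
    (hfT : ∀ i ∈ s, f i ∈ T)
    (hinj : ∀ i ∈ s, ∀ j ∈ s, f i = f j → i = j)
    (hsum : ∑ i ∈ s, c i • f i = 0) : ∀ i ∈ s, c i = 0 := by
  classical
  intro i hi
  let φ : ↥s → ↥T := fun x => ⟨f x, hfT x x.2⟩
  have hφ : Function.Injective φ := by
    intro x y hxy
    have : f x = f y := congrArg Subtype.val hxy
    exact Subtype.ext (hinj x x.2 y y.2 this)
  have hli : LinearIndependent 𝔽 (fun x : ↥s => f (x : ι)) := hT.comp φ hφ
  have := linearIndependent_iff'.mp hli Finset.univ (fun x => c (x : ι)) ?_ ⟨i, hi⟩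
    (Finset.mem_univ _)
  · exact this
  · rw [← hsum, ← Finset.sum_coe_sort s (fun i => c i • f i)]


open PowerSeries in
set_option maxHeartbeats 1600000 in
/-- Lemma `lem:gen:Sigma`, §3.2.4.  Under hypotheses (i)–(iii) on the
spanning set `S` of the torsion `𝔽[[Y]]`-module `M`, `S` is an `𝔽`-basis of `M` and
`M[Y]` is spanned by `S ∩ M[Y]` (so `M[Y]` is finite-dimensional); if moreover
`Y·S̃ = S̃ ∪ {0}` then the dual `M^∨` is a free `𝔽[[Y]]`-module of rank
`|S ∩ M[Y]| = dim_𝔽 M[Y]`. -/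
theorem statement11
    (htors : ∀ m : M, ∃ k : ℕ, ((PowerSeries.X : PowerSeries 𝔽) ^ k) • m = 0)
    (S : Set M) (h0 : (0 : M) ∉ S) (hspan : Submodule.span 𝔽 S = ⊤)
    (h1 : ∀ v ∈ S, (PowerSeries.X : PowerSeries 𝔽) • v ∈ scaled 𝔽 M S ∪ {0})
    (h2 : ∀ v₁ ∈ S, ∀ v₂ ∈ S, (PowerSeries.X : PowerSeries 𝔽) • v₁ ≠ 0 →
      Submodule.span 𝔽 {(PowerSeries.X : PowerSeries 𝔽) • v₁}
        = Submodule.span 𝔽 {(PowerSeries.X : PowerSeries 𝔽) • v₂} → v₁ = v₂)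
    (h3fin : (S ∩ (torsionSub 𝔽 M : Set M)).Finite)
    (h3ind : LinearIndependent 𝔽 (fun v : ↥(S ∩ (torsionSub 𝔽 M : Set M)) => (v : M))) :
    LinearIndependent 𝔽 (fun v : ↥S => (v : M)) ∧
    Submodule.span 𝔽 (S ∩ (torsionSub 𝔽 M : Set M)) = torsionSub 𝔽 M ∧
    FiniteDimensional 𝔽 ↥(torsionSub 𝔽 M) ∧
    ((fun v : M => (PowerSeries.X : PowerSeries 𝔽) • v) '' scaled 𝔽 M S
        = scaled 𝔽 M S ∪ {0} →
      Nat.card ↥(S ∩ (torsionSub 𝔽 M : Set M)) = Module.finrank 𝔽 ↥(torsionSub 𝔽 M) ∧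
      ∃ b : Fin (Nat.card ↥(S ∩ (torsionSub 𝔽 M : Set M))) → (M →ₗ[𝔽] 𝔽),
        Function.Bijective
          (fun c : Fin (Nat.card ↥(S ∩ (torsionSub 𝔽 M : Set M))) → PowerSeries 𝔽 =>
            ∑ i, dualSMul 𝔽 M (c i) (b i))) := by
  classical
  classical
  -- depth
  set d : M → ℕ := fun m => Nat.find (htors m) with hd_def
  have d_spec : ∀ m : M, ((X : 𝔽⟦X⟧) ^ d m) • m = 0 := fun m => Nat.find_spec (htors m)
  have d_min : ∀ m : M, ∀ k < d m, ((X : 𝔽⟦X⟧) ^ k) • m ≠ 0 :=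
    fun m k hk => Nat.find_min (htors m) hk
  have d_le : ∀ m : M, ∀ k, ((X : 𝔽⟦X⟧) ^ k) • m = 0 → d m ≤ k :=
    fun m k hk => Nat.find_le hk
  have d_mono : ∀ m : M, ∀ k, d m ≤ k → ((X : 𝔽⟦X⟧) ^ k) • m = 0 := by
    intro m k hk
    have : (X : 𝔽⟦X⟧) ^ k = X ^ (k - d m) * X ^ d m := by
      rw [← pow_add]; congr 1; omega
    rw [this, mul_smul, d_spec, smul_zero]
  have d_pos : ∀ v ∈ S, 1 ≤ d v := by
    intro v hv
    by_contra h
    have h0' : d v = 0 := by omega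
    have := d_spec v
    rw [h0', pow_zero, one_smul] at this
    exact h0 (this ▸ hv)
  -- successor
  have hnx : ∀ v, v ∈ S → (X : 𝔽⟦X⟧) • v ≠ 0 →
      ∃ c : 𝔽, ∃ w : M, c ≠ 0 ∧ w ∈ S ∧ (X : 𝔽⟦X⟧) • v = c • w := by
    intro v hv hne
    rcases h1 v hv with h | h
    · obtain ⟨c, hc, w, hw, hcw⟩ := h
      exact ⟨c, w, hc, hw, hcw⟩
    · exact absurd h hne
  choose! sc nxt hsc hnxtS hnxt_eq using hnx
  -- depth of successor
  have d_succ : ∀ v ∈ S, (X : 𝔽⟦X⟧) • v ≠ 0 → d v = d (nxt v) + 1 := by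
    intro v hv hne
    have key : ∀ k : ℕ, ((X : 𝔽⟦X⟧) ^ (k+1)) • v = 0 ↔ ((X : 𝔽⟦X⟧) ^ k) • nxt v = 0 := by
      intro k
      have : ((X : 𝔽⟦X⟧) ^ (k+1)) • v = sc v • (((X : 𝔽⟦X⟧) ^ k) • nxt v) := by
        rw [pow_succ, mul_smul, hnxt_eq v hv hne, smul_comm]
      rw [this, smul_eq_zero]
      simp [hsc v hv hne]
    have h1' : d v ≤ d (nxt v) + 1 := d_le _ _ ((key _).mpr (d_spec _))
    have hdv : 1 ≤ d v := d_pos v hv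
    have h2' : d (nxt v) ≤ d v - 1 := by
      apply d_le
      have := d_spec v
      rw [show d v = (d v - 1) + 1 by omega] at this
      exact (key _).mp this
    omega
  have d_ge2 : ∀ v ∈ S, 2 ≤ d v → (X : 𝔽⟦X⟧) • v ≠ 0 := by
    intro v hv h2' hc
    have := d_le v 1 (by rwa [pow_one])
    omega
  -- structure lemma B
  have hB : ∀ k : ℕ, ∀ v ∈ S, k < d v →
      (nxt^[k] v ∈ S ∧ d (nxt^[k] v) = d v - k ∧
        ∃ γ : 𝔽, γ ≠ 0 ∧ ((X : 𝔽⟦X⟧) ^ k) • v = γ • nxt^[k] v) := by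
    intro k
    induction k with
    | zero => intro v hv _; exact ⟨hv, by simp, 1, one_ne_zero, by simp⟩
    | succ k ih =>
      intro v hv hk
      have hne : (X : 𝔽⟦X⟧) • v ≠ 0 := d_ge2 v hv (by omega)
      have hnS := hnxtS v hv hne
      have hdn : d (nxt v) = d v - 1 := by have := d_succ v hv hne; omega
      have hk' : k < d (nxt v) := by omega
      obtain ⟨hS', hd', γ, hγ, heq⟩ := ih (nxt v) hnS hk'
      refine ⟨by rw [Function.iterate_succ_apply]; exact hS', ?_, ?_⟩
      · rw [Function.iterate_succ_apply]; omega
      · refine ⟨sc v * γ, mul_ne_zero (hsc v hv hne) hγ, ?_⟩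
        rw [Function.iterate_succ_apply, pow_succ, mul_smul, hnxt_eq v hv hne,
          smul_comm, heq, smul_smul]
  -- injectivity C
  have spanX : ∀ v ∈ S, (X : 𝔽⟦X⟧) • v ≠ 0 →
      Submodule.span 𝔽 {(X : 𝔽⟦X⟧) • v} = Submodule.span 𝔽 {nxt v} := by
    intro v hv hne
    rw [hnxt_eq v hv hne]
    exact Submodule.span_singleton_smul_eq (IsUnit.mk0 _ (hsc v hv hne)) _
  have inj1 : ∀ v₁ ∈ S, ∀ v₂ ∈ S, (X : 𝔽⟦X⟧) • v₁ ≠ 0 → (X : 𝔽⟦X⟧) • v₂ ≠ 0 →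
      nxt v₁ = nxt v₂ → v₁ = v₂ := by
    intro v₁ h₁ v₂ h₂ hn₁ hn₂ heq
    exact h2 v₁ h₁ v₂ h₂ hn₁ (by rw [spanX v₁ h₁ hn₁, spanX v₂ h₂ hn₂, heq])
  have hC : ∀ k : ℕ, ∀ v₁ ∈ S, ∀ v₂ ∈ S, k < d v₁ → k < d v₂ →
      nxt^[k] v₁ = nxt^[k] v₂ → v₁ = v₂ := by
    intro k
    induction k with
    | zero => intro v₁ _ v₂ _ _ _ h; simpa using h
    | succ k ih =>
      intro v₁ h₁ v₂ h₂ hk₁ hk₂ heq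
      have hne₁ : (X : 𝔽⟦X⟧) • v₁ ≠ 0 := d_ge2 v₁ h₁ (by omega)
      have hne₂ : (X : 𝔽⟦X⟧) • v₂ ≠ 0 := d_ge2 v₂ h₂ (by omega)
      have hd₁ := d_succ v₁ h₁ hne₁
      have hd₂ := d_succ v₂ h₂ hne₂
      rw [Function.iterate_succ_apply, Function.iterate_succ_apply] at heq
      have := ih (nxt v₁) (hnxtS v₁ h₁ hne₁) (nxt v₂) (hnxtS v₂ h₂ hne₂)
        (by omega) (by omega) heq
      exact inj1 v₁ h₁ v₂ h₂ hne₁ hne₂ this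
  -- gamma function
  have hBγ : ∀ (k : ℕ) (v : M), v ∈ S → k < d v →
      ∃ γ : 𝔽, γ ≠ 0 ∧ ((X : 𝔽⟦X⟧) ^ k) • v = γ • nxt^[k] v :=
    fun k v hv hk => (hB k v hv hk).2.2
  choose! γ hγne hγeq using hBγ
  -- linear independence of S
  have hindep : LinearIndependent 𝔽 (fun v : ↥S => (v : M)) := by
    rw [linearIndependent_iff']
    have main : ∀ N : ℕ, ∀ s : Finset ↥S, (∀ v ∈ s, d (v : M) ≤ N) → ∀ g : ↥S → 𝔽,
        ∑ i ∈ s, g i • (i : M) = 0 → ∀ i ∈ s, g i = 0 := by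
      intro N
      induction N with
      | zero =>
        intro s hs g _ i hi
        exact absurd (hs i hi) (by have := d_pos (i : M) i.2; omega)
      | succ N ih =>
        intro s hs g hsum i hi
        have hzero : ∀ j ∈ s, d (j : M) = N + 1 → g j = 0 := by
          intro j hj hdj
          set s₂ := s.filter (fun v : ↥S => d (v : M) = N + 1) with hs₂
          have h₀ : ∑ x ∈ s, g x • (((X : 𝔽⟦X⟧) ^ N) • (x : M)) = 0 := by
            calc ∑ x ∈ s, g x • (((X : 𝔽⟦X⟧) ^ N) • (x : M))
                = ((X : 𝔽⟦X⟧) ^ N) • ∑ x ∈ s, g x • (x : M) := by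
                  rw [Finset.smul_sum]
                  exact Finset.sum_congr rfl (fun x _ => smul_comm _ _ _)
              _ = 0 := by rw [hsum, smul_zero]
          have h₁ : ∑ x ∈ s₂, g x • (((X : 𝔽⟦X⟧) ^ N) • (x : M)) = 0 := by
            rw [← h₀]
            apply Finset.sum_subset (Finset.filter_subset _ _)
            intro x hx hx2
            have hdx : d (x : M) ≤ N := by
              have := hs x hx
              simp only [hs₂, Finset.mem_filter, hx, true_and] at hx2
              omega
            rw [d_mono _ _ hdx, smul_zero]
          have h₂ : ∑ x ∈ s₂, (g x * γ N (x : M)) • nxt^[N] (x : M) = 0 := by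
            rw [← h₁]
            apply Finset.sum_congr rfl
            intro x hx
            have hx' := (Finset.mem_filter.mp hx).2
            rw [hγeq N (x : M) x.2 (by omega), smul_smul]
          have key := helperInd 𝔽 M (S ∩ (torsionSub 𝔽 M : Set M)) h3ind s₂
            (fun x => nxt^[N] (x : M)) (fun x => g x * γ N (x : M))
            (fun x hx => by
              have hx' := (Finset.mem_filter.mp hx).2
              obtain ⟨hS', hd', _⟩ := hB N (x : M) x.2 (by omega)
              refine ⟨hS', ?_⟩
              have := d_spec (nxt^[N] (x : M))
              rw [show d (nxt^[N] (x:M)) = 1 by omega, pow_one] at this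
              exact this)
            (fun x hx y hy hxy => by
              have hx' := (Finset.mem_filter.mp hx).2
              have hy' := (Finset.mem_filter.mp hy).2
              exact Subtype.ext (hC N (x : M) x.2 (y : M) y.2 (by omega) (by omega) hxy))
            h₂
          have hj2 : j ∈ s₂ := Finset.mem_filter.mpr ⟨hj, hdj⟩
          have := key j hj2
          exact (mul_eq_zero.mp this).resolve_right (hγne N (j : M) j.2 (by omega))
        by_cases hdi : d (i : M) = N + 1
        · exact hzero i hi hdi
        · have hdi' : d (i : M) ≤ N := by have := hs i hi; omega
          set s₁ := s.filter (fun v : ↥S => d (v : M) ≤ N) with hs₁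
          have hsum₁ : ∑ x ∈ s₁, g x • (x : M) = 0 := by
            rw [← hsum]
            apply Finset.sum_subset (Finset.filter_subset _ _)
            intro x hx hx1
            have hdx : d (x : M) = N + 1 := by
              have := hs x hx
              simp only [hs₁, Finset.mem_filter, hx, true_and] at hx1
              omega
            rw [hzero x hx hdx, zero_smul]
          exact ih s₁ (fun v hv => (Finset.mem_filter.mp hv).2) g hsum₁ i
            (Finset.mem_filter.mpr ⟨hi, hdi'⟩)
    intro s g hsum i hi
    exact main (s.sup fun v : ↥S => d (v : M)) s (fun v hv => Finset.le_sup (f := fun v : ↥S => d (v : M)) hv) g hsum i hi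
  -- Part 2: span of kernel elements
  have hsum_tor : ∀ m : M, (X : 𝔽⟦X⟧) • m = 0 →
      m ∈ Submodule.span 𝔽 (S ∩ (torsionSub 𝔽 M : Set M)) := by
    intro m hm
    have hmS : m ∈ Submodule.span 𝔽 S := by rw [hspan]; trivial
    obtain ⟨c, hsupp, hsum⟩ := Submodule.mem_span_set.mp hmS
    have hsum' : ∑ v ∈ c.support, c v • v = m := hsum
    have hX : ∑ v ∈ c.support, c v • ((X : 𝔽⟦X⟧) • v) = 0 := by
      calc ∑ v ∈ c.support, c v • ((X : 𝔽⟦X⟧) • v)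
          = (X : 𝔽⟦X⟧) • ∑ v ∈ c.support, c v • v := by
            rw [Finset.smul_sum]
            exact Finset.sum_congr rfl fun v _ => smul_comm _ _ _
        _ = 0 := by rw [hsum', hm]
    have hker : ∀ v ∈ c.support, (X : 𝔽⟦X⟧) • v = 0 := by
      intro v hv
      by_contra hne
      set t := c.support.filter (fun v : M => (X : 𝔽⟦X⟧) • v ≠ 0) with ht
      have h₁ : ∑ v ∈ t, (c v * sc v) • nxt v = 0 := by
        calc ∑ v ∈ t, (c v * sc v) • nxt v
            = ∑ v ∈ t, c v • ((X : 𝔽⟦X⟧) • v) := by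
              apply Finset.sum_congr rfl
              intro x hx
              rcases Finset.mem_filter.mp hx with ⟨hx1, hx2⟩
              rw [hnxt_eq x (hsupp hx1) hx2, smul_smul]
          _ = ∑ v ∈ c.support, c v • ((X : 𝔽⟦X⟧) • v) := by
              apply Finset.sum_subset (Finset.filter_subset _ _)
              intro x hx hx2
              have hx0 : (X : 𝔽⟦X⟧) • x = 0 := by
                by_contra hc
                exact hx2 (Finset.mem_filter.mpr ⟨hx, hc⟩)
              rw [hx0, smul_zero]
          _ = 0 := hX
      have hz := helperInd 𝔽 M S hindep t nxt (fun v => c v * sc v)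
        (fun x hx => hnxtS x (hsupp (Finset.mem_filter.mp hx).1) (Finset.mem_filter.mp hx).2)
        (fun x hx y hy hxy => inj1 x (hsupp (Finset.mem_filter.mp hx).1) y
          (hsupp (Finset.mem_filter.mp hy).1) (Finset.mem_filter.mp hx).2
          (Finset.mem_filter.mp hy).2 hxy)
        h₁ v (Finset.mem_filter.mpr ⟨hv, hne⟩)
      have hcv := Finsupp.mem_support_iff.mp hv
      exact hcv ((mul_eq_zero.mp hz).resolve_right (hsc v (hsupp hv) hne))
    rw [← hsum']
    apply Submodule.sum_mem
    intro v hv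
    exact Submodule.smul_mem _ _ (Submodule.subset_span ⟨hsupp hv, hker v hv⟩)
  have hspan2 : Submodule.span 𝔽 (S ∩ (torsionSub 𝔽 M : Set M)) = torsionSub 𝔽 M := by
    apply le_antisymm
    · exact Submodule.span_le.mpr Set.inter_subset_right
    · exact fun m hm => hsum_tor m hm
  have hfd : FiniteDimensional 𝔽 ↥(torsionSub 𝔽 M) := by
    rw [← hspan2]
    exact FiniteDimensional.span_of_finite 𝔽 h3fin
  refine ⟨hindep, hspan2, hfd, ?_⟩
  intro himg
  -- Part 4
  -- (a) cardinality
  haveI : Fintype ↥(S ∩ (torsionSub 𝔽 M : Set M)) := h3fin.fintype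
  have hcard : Nat.card ↥(S ∩ (torsionSub 𝔽 M : Set M))
      = Module.finrank 𝔽 ↥(torsionSub 𝔽 M) := by
    conv_rhs => rw [← hspan2]
    rw [finrank_span_set_eq_card h3ind, Set.toFinset_card, Nat.card_eq_fintype_card]
  -- (b) predecessor
  have hprev0 : ∀ v, v ∈ S → ∃ u : M, ∃ e : 𝔽, u ∈ S ∧ e ≠ 0 ∧ (X : 𝔽⟦X⟧) • u = e • v := by
    intro v hv
    have hvS : v ∈ scaled 𝔽 M S := ⟨1, one_ne_zero, v, hv, (one_smul _ _).symm⟩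
    have hvim : v ∈ (fun v : M => (X : 𝔽⟦X⟧) • v) '' scaled 𝔽 M S := by
      rw [himg]; exact Or.inl hvS
    obtain ⟨x, hx, hxv⟩ := hvim
    obtain ⟨cc, hcc, u, hu, rfl⟩ := hx
    refine ⟨u, cc⁻¹, hu, inv_ne_zero hcc, ?_⟩
    have hcomm : cc • ((X : 𝔽⟦X⟧) • u) = v := by rw [← smul_comm]; exact hxv
    rw [← hcomm, smul_smul, inv_mul_cancel₀ hcc, one_smul]
  choose! prev esc hprevS hesc hprev_eq using hprev0
  -- (c) no two elements of S are proportional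
  have hprop : ∀ x ∈ S, ∀ y ∈ S, ∀ cc : 𝔽, cc ≠ 0 → x = cc • y → x = y := by
    intro x hx y hy cc hcc hxy
    by_contra hne
    have hxi : (⟨x, hx⟩ : ↥S) ≠ ⟨y, hy⟩ := fun h => hne (congrArg Subtype.val h)
    have hz := linearIndependent_iff'.mp hindep {⟨x, hx⟩, ⟨y, hy⟩}
      (fun z => if z = ⟨x, hx⟩ then 1 else -cc) ?_ ⟨x, hx⟩ (by simp)
    · simp at hz
    · rw [Finset.sum_pair hxi]
      show (if (⟨x, hx⟩ : ↑S) = ⟨x, hx⟩ then (1 : 𝔽) else -cc) • x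
        + (if (⟨y, hy⟩ : ↑S) = ⟨x, hx⟩ then (1 : 𝔽) else -cc) • y = 0
      rw [if_pos rfl, if_neg (Ne.symm hxi), one_smul, neg_smul, hxy]
      exact add_neg_cancel _
  have hXprev : ∀ v ∈ S, (X : 𝔽⟦X⟧) • prev v ≠ 0 := by
    intro v hv
    rw [hprev_eq v hv]
    exact smul_ne_zero (hesc v hv) (fun h => h0 (h ▸ hv))
  have nxt_prev : ∀ v ∈ S, nxt (prev v) = v := by
    intro v hv
    have h₁ := hnxt_eq (prev v) (hprevS v hv) (hXprev v hv)
    have hscne := hsc (prev v) (hprevS v hv) (hXprev v hv)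
    have h₂ : sc (prev v) • nxt (prev v) = esc v • v := by rw [← h₁, hprev_eq v hv]
    have h₃ : nxt (prev v) = ((sc (prev v))⁻¹ * esc v) • v := by
      rw [mul_smul, ← h₂, inv_smul_smul₀ hscne]
    exact hprop (nxt (prev v)) (hnxtS _ (hprevS v hv) (hXprev v hv)) v hv _
      (mul_ne_zero (inv_ne_zero hscne) (hesc v hv)) h₃
  have d_prev : ∀ v ∈ S, d (prev v) = d v + 1 := by
    intro v hv
    have := d_succ (prev v) (hprevS v hv) (hXprev v hv)
    rwa [nxt_prev v hv] at this
  -- (e) chains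
  have chain : ∀ w, w ∈ S → (X : 𝔽⟦X⟧) • w = 0 → ∀ k : ℕ,
      prev^[k] w ∈ S ∧ d (prev^[k] w) = k + 1 ∧ nxt^[k] (prev^[k] w) = w := by
    intro w hw hw0
    have hdw : d w = 1 := by
      have h1' := d_le w 1 (by rwa [pow_one])
      have := d_pos w hw
      omega
    intro k
    induction k with
    | zero => exact ⟨hw, by simpa using hdw, by simp⟩
    | succ k ih =>
      obtain ⟨hS', hd', hnx'⟩ := ih
      rw [Function.iterate_succ_apply']
      refine ⟨hprevS _ hS', ?_, ?_⟩
      · rw [d_prev _ hS']; omega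
      · rw [Function.iterate_succ_apply, nxt_prev _ hS', hnx']
  -- (f) uniqueness of chains
  have hD : ∀ k : ℕ, ∀ v ∈ S, d v = k + 1 → v = prev^[k] (nxt^[k] v) := by
    intro k
    induction k with
    | zero => intro v hv _; simp
    | succ k ih =>
      intro v hv hdv
      have hne : (X : 𝔽⟦X⟧) • v ≠ 0 := d_ge2 v hv (by omega)
      have hnS := hnxtS v hv hne
      have hdn : d (nxt v) = k + 1 := by have := d_succ v hv hne; omega
      have ihv := ih (nxt v) hnS hdn
      have goal1 : v = prev (nxt v) := by
        apply h2 v hv (prev (nxt v)) (hprevS _ hnS) hne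
        rw [spanX v hv hne, hprev_eq _ hnS]
        exact (Submodule.span_singleton_smul_eq (IsUnit.mk0 _ (hesc _ hnS)) _).symm
      have e1 : nxt^[k + 1] v = nxt^[k] (nxt v) := Function.iterate_succ_apply nxt k v
      rw [e1, Function.iterate_succ_apply', ← ihv, ← goal1]
  -- nxt^[t] on chains
  have hA : ∀ t : ℕ, ∀ k : ℕ, t ≤ k → ∀ w, w ∈ S → (X : 𝔽⟦X⟧) • w = 0 →
      nxt^[t] (prev^[k] w) = prev^[k - t] w := by
    intro t
    induction t with
    | zero => intro k _ w _ _; simp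
    | succ t ih =>
      intro k hk w hw hw0
      have hk1 : 1 ≤ k := by omega
      have e1 : prev^[k] w = prev (prev^[k - 1] w) := by
        have h := Function.iterate_succ_apply' prev (k - 1) w
        rw [show (k - 1).succ = k from by omega] at h
        exact h
      rw [Function.iterate_succ_apply, e1, nxt_prev _ (chain w hw hw0 (k - 1)).1,
        ih (k - 1) (by omega) w hw hw0]
      congr 1
      omega
  -- (g) enumeration of the kernel elements
  set n := Nat.card ↥(S ∩ (torsionSub 𝔽 M : Set M)) with hn
  have hn' : n = Fintype.card ↥(S ∩ (torsionSub 𝔽 M : Set M)) := Nat.card_eq_fintype_card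
  have eqv : Fin n ≃ ↥(S ∩ (torsionSub 𝔽 M : Set M)) := by
    rw [hn']
    exact (Fintype.equivFin _).symm
  set W : Fin n → M := fun j => ((eqv j : ↥(S ∩ (torsionSub 𝔽 M : Set M))) : M) with hW
  have hWS : ∀ j, W j ∈ S := fun j => (eqv j).2.1
  have hW0 : ∀ j, (X : 𝔽⟦X⟧) • W j = 0 := fun j => (eqv j).2.2
  have hWinj : Function.Injective W := by
    intro j j' h
    exact eqv.injective (Subtype.ext h)
  have hUS : ∀ (j : Fin n) (k : ℕ), prev^[k] (W j) ∈ S :=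
    fun j k => (chain (W j) (hWS j) (hW0 j) k).1
  have hUd : ∀ (j : Fin n) (k : ℕ), d (prev^[k] (W j)) = k + 1 :=
    fun j k => (chain (W j) (hWS j) (hW0 j) k).2.1
  have hdW : ∀ j : Fin n, d (W j) = 1 := fun j => by simpa using hUd j 0
  -- gamma scalars on the chain
  have hgeq : ∀ (j : Fin n) (k : ℕ),
      ((X : 𝔽⟦X⟧) ^ k) • prev^[k] (W j) = γ k (prev^[k] (W j)) • W j := by
    intro j k
    have h := hγeq k (prev^[k] (W j)) (hUS j k) (by rw [hUd]; omega)
    rwa [hA k k le_rfl (W j) (hWS j) (hW0 j), Nat.sub_self, Function.iterate_zero_apply] at h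
  have hgne : ∀ (j : Fin n) (k : ℕ), γ k (prev^[k] (W j)) ≠ 0 :=
    fun j k => hγne k (prev^[k] (W j)) (hUS j k) (by rw [hUd]; omega)
  -- the basis
  have hBasSpan : ⊤ ≤ Submodule.span 𝔽 (Set.range (fun v : ↥S => (v : M))) := by
    rw [Subtype.range_coe, hspan]
  have hBcoord : ∀ (i j : ↥S),
      (Module.Basis.mk hindep hBasSpan).coord i (j : M) = if j = i then 1 else 0 := by
    intro i j
    have hj : (j : M) = (Module.Basis.mk hindep hBasSpan) j := (Module.Basis.mk_apply hindep hBasSpan j).symm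
    rw [hj, Module.Basis.coord_apply, Module.Basis.repr_self, Finsupp.single_apply]
  -- (h) truncation of the action
  have hE : ∀ (a : 𝔽⟦X⟧) (m : M) (k : ℕ), ((X : 𝔽⟦X⟧) ^ (k + 1)) • m = 0 →
      a • m = ∑ t ∈ Finset.range (k + 1),
        (PowerSeries.coeff t a) • (((X : 𝔽⟦X⟧) ^ t) • m) := by
    intro a m k hm
    set P : 𝔽⟦X⟧ := ∑ t ∈ Finset.range (k + 1),
      (PowerSeries.coeff t a) • (X : 𝔽⟦X⟧) ^ t with hP
    have hdvd : (X : 𝔽⟦X⟧) ^ (k + 1) ∣ a - P := by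
      rw [PowerSeries.X_pow_dvd_iff]
      intro t ht
      rw [map_sub]
      have hPt : PowerSeries.coeff t P = PowerSeries.coeff t a := by
        rw [hP, map_sum, Finset.sum_eq_single t]
        · rw [map_smul, PowerSeries.coeff_X_pow, if_pos rfl, smul_eq_mul, mul_one]
        · intro s hs hst
          rw [map_smul, PowerSeries.coeff_X_pow, if_neg (fun h => hst h.symm), smul_zero]
        · intro hni
          exact absurd (Finset.mem_range.mpr ht) hni
      rw [hPt, sub_self]
    obtain ⟨q, hq⟩ := hdvd
    have ha : a = P + (X : 𝔽⟦X⟧) ^ (k + 1) * q := by rw [← hq]; ring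
    have hzq : ((X : 𝔽⟦X⟧) ^ (k + 1) * q) • m = 0 := by
      rw [mul_comm, mul_smul, hm, smul_zero]
    calc a • m = (P + (X : 𝔽⟦X⟧) ^ (k + 1) * q) • m := by rw [← ha]
      _ = P • m + ((X : 𝔽⟦X⟧) ^ (k + 1) * q) • m := add_smul _ _ _
      _ = P • m := by rw [hzq, add_zero]
      _ = ∑ t ∈ Finset.range (k + 1), (PowerSeries.coeff t a) • (((X : 𝔽⟦X⟧) ^ t) • m) := by
          rw [hP, Finset.sum_smul]
          exact Finset.sum_congr rfl fun t _ => smul_assoc _ _ _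
  -- (i) evaluation of coordinates on the chains
  have hE2 : ∀ (j j' : Fin n) (k : ℕ) (a : 𝔽⟦X⟧),
      (Module.Basis.mk hindep hBasSpan).coord ⟨W j, hWS j⟩ (a • prev^[k] (W j')) =
        if j = j' then PowerSeries.coeff k a * γ k (prev^[k] (W j')) else 0 := by
    intro j j' k a
    have hv0 : ((X : 𝔽⟦X⟧) ^ (k + 1)) • prev^[k] (W j') = 0 := d_mono _ _ (le_of_eq (hUd j' k))
    rw [hE a _ k hv0, map_sum]
    have hterm : ∀ t ∈ Finset.range (k + 1),
        (Module.Basis.mk hindep hBasSpan).coord ⟨W j, hWS j⟩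
          ((PowerSeries.coeff t a) • (((X : 𝔽⟦X⟧) ^ t) • prev^[k] (W j')))
        = if t = k ∧ j = j' then PowerSeries.coeff k a * γ k (prev^[k] (W j')) else 0 := by
      intro t ht
      have htk : t ≤ k := by
        have := Finset.mem_range.mp ht
        omega
      have hXt : ((X : 𝔽⟦X⟧) ^ t) • prev^[k] (W j') =
          γ t (prev^[k] (W j')) • prev^[k - t] (W j') := by
        rw [hγeq t (prev^[k] (W j')) (hUS j' k) (by rw [hUd]; omega),
          hA t k htk (W j') (hWS j') (hW0 j')]
      rw [map_smul, hXt, map_smul]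
      have hco : (Module.Basis.mk hindep hBasSpan).coord ⟨W j, hWS j⟩ (prev^[k - t] (W j'))
          = if prev^[k - t] (W j') = W j then 1 else 0 := by
        have h := hBcoord ⟨W j, hWS j⟩ ⟨prev^[k - t] (W j'), hUS j' (k - t)⟩
        simpa [Subtype.ext_iff] using h
      rw [hco]
      by_cases hcase : prev^[k - t] (W j') = W j
      · have hkt0 : k - t = 0 := by
          have h1' := hUd j' (k - t)
          have h2' := hdW j
          rw [hcase] at h1'
          omega
        have htk' : t = k := by omega
        have hjj : j = j' := by
          apply hWinj
          rw [← hcase, hkt0, Function.iterate_zero_apply]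
        rw [if_pos hcase, if_pos (show t = k ∧ j = j' from ⟨htk', hjj⟩)]
        rw [smul_eq_mul, smul_eq_mul, mul_one, htk']
      · have hnc : ¬(t = k ∧ j = j') := by
          rintro ⟨rfl, rfl⟩
          exact hcase (by rw [Nat.sub_self, Function.iterate_zero_apply])
        rw [if_neg hnc, if_neg hcase]
        simp
    rw [Finset.sum_congr rfl hterm]
    by_cases hjj : j = j'
    · subst hjj
      simp only [and_true]
      rw [Finset.sum_ite_eq' (Finset.range (k + 1)) k
        (fun _ => PowerSeries.coeff k a * γ k (prev^[k] (W j)))]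
      simp
    · simp [hjj]
  -- the evaluation of the candidate map
  have hFeval : ∀ (c : Fin n → PowerSeries 𝔽) (j : Fin n) (k : ℕ),
      (∑ i, dualSMul 𝔽 M (c i) ((Module.Basis.mk hindep hBasSpan).coord ⟨W i, hWS i⟩))
          (prev^[k] (W j))
        = PowerSeries.coeff k (c j) * γ k (prev^[k] (W j)) := by
    intro c j k
    rw [LinearMap.sum_apply]
    have : ∀ i : Fin n, (dualSMul 𝔽 M (c i) ((Module.Basis.mk hindep hBasSpan).coord ⟨W i, hWS i⟩))
        (prev^[k] (W j))
        = if i = j then PowerSeries.coeff k (c i) * γ k (prev^[k] (W j)) else 0 := by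
      intro i
      show (Module.Basis.mk hindep hBasSpan).coord ⟨W i, hWS i⟩ ((c i) • prev^[k] (W j)) = _
      rw [hE2 i j k (c i)]
    rw [Finset.sum_congr rfl (fun i _ => this i)]
    rw [Finset.sum_ite_eq' Finset.univ j
      (fun i => PowerSeries.coeff k (c i) * γ k (prev^[k] (W j)))]
    simp
  -- conclusion
  refine ⟨hcard, fun j => (Module.Basis.mk hindep hBasSpan).coord ⟨W j, hWS j⟩, ?_, ?_⟩
  · -- injective
    intro c c' hcc
    funext j
    apply PowerSeries.ext
    intro k
    have h := DFunLike.congr_fun hcc (prev^[k] (W j))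
    simp only [] at h
    rw [hFeval c j k, hFeval c' j k] at h
    exact mul_right_cancel₀ (hgne j k) h
  · -- surjective
    intro f
    refine ⟨fun j => PowerSeries.mk (fun k => f (prev^[k] (W j)) * (γ k (prev^[k] (W j)))⁻¹), ?_⟩
    apply Module.Basis.ext (Module.Basis.mk hindep hBasSpan)
    intro v
    rw [Module.Basis.mk_apply]
    obtain ⟨j, k, hv⟩ : ∃ (j : Fin n) (k : ℕ), (v : M) = prev^[k] (W j) := by
      have hdp := d_pos (v : M) v.2
      set k := d (v : M) - 1 with hk
      have hdv : d (v : M) = k + 1 := by omega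
      have hwK : nxt^[k] (v : M) ∈ S ∩ (torsionSub 𝔽 M : Set M) := by
        obtain ⟨hS', hd', -⟩ := hB k (v : M) v.2 (by omega)
        refine ⟨hS', ?_⟩
        have hz := d_spec (nxt^[k] (v : M))
        rw [show d (nxt^[k] (v : M)) = 1 by omega, pow_one] at hz
        exact hz
      refine ⟨eqv.symm ⟨nxt^[k] (v : M), hwK⟩, k, ?_⟩
      have hWe : W (eqv.symm ⟨nxt^[k] (v : M), hwK⟩) = nxt^[k] (v : M) := by
        rw [hW]
        simp [Equiv.apply_symm_apply]
      rw [hWe]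
      exact hD k (v : M) v.2 hdv
    rw [hv, hFeval, PowerSeries.coeff_mk, mul_assoc,
      inv_mul_cancel₀ (hgne j k), mul_one]

end BHHMS
end

section
/- Let p > 2 be a prime and F a finite field of characteristic p. Then for every a ∈ 𝔽_p one has Σ_{λ ∈ F, Tr_{F/𝔽_p}(λ) = a} λ⁻¹ = a⁻¹ in F (reading a and a⁻¹ in F via 𝔽_p ⊆ F, and with the convention 0⁻¹ = 0). In particular, for a ≠ 0 the sum of the inverses of the elements of trace a equals a⁻¹, and the sum of the inverses of the nonzero elements of trace 0 vanishes. (Paper: the key computation in the proof of Lemma 'lem:ker' in §3.2.2, via the identity Σ_{λ∈F^×} λ⁻¹[Tr(λ)] = Σ_{a∈𝔽_p^×} a⁻¹[a].) -/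
/-!
Statement 12 (the key computation in the proof of Lemma `lem:ker`, §3.2.2 of the paper):
`F` is a finite field of characteristic `p > 2`, with prime field `𝔽_p = ZMod p` (the
embedding `𝔽_p ⊆ F` is recorded by `[Algebra (ZMod p) F]`, which is unique) and trace map
`Tr_{F/𝔽_p} = Algebra.trace (ZMod p) F`.  Inverses use the junk convention `0⁻¹ = 0`.
-/

open Finset

section Aux

variable (p : ℕ) [Fact p.Prime]
variable (F : Type*) [Field F] [Fintype F] [DecidableEq F] [Algebra (ZMod p) F]

/-- The fiber sum `G a = Σ_{Tr x = a} x⁻¹`. -/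
private noncomputable def fibSum (a : ZMod p) : F :=
  ∑ x ∈ Finset.univ.filter (fun x : F => Algebra.trace (ZMod p) F x = a), x⁻¹

private lemma fibSum_smul (c : ZMod p) (hc : c ≠ 0) (a : ZMod p) :
    fibSum p F (c * a) = (algebraMap (ZMod p) F c)⁻¹ * fibSum p F a := by
  have hinj : Function.Injective (algebraMap (ZMod p) F) := (algebraMap (ZMod p) F).injective
  have hcF : algebraMap (ZMod p) F c ≠ 0 := by
    rw [Ne, map_eq_zero_iff _ hinj]; exact hc
  unfold fibSum
  rw [Finset.mul_sum]
  refine Finset.sum_bij' (fun x _ => (algebraMap (ZMod p) F c)⁻¹ * x)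
    (fun y _ => algebraMap (ZMod p) F c * y) ?_ ?_ ?_ ?_ ?_
  · intro x hx
    simp only [Finset.mem_filter, Finset.mem_univ, true_and] at hx ⊢
    calc Algebra.trace (ZMod p) F ((algebraMap (ZMod p) F c)⁻¹ * x)
        = c⁻¹ • Algebra.trace (ZMod p) F x := by
          rw [← map_smul]
          congr 1
          rw [Algebra.smul_def, map_inv₀]
      _ = a := by rw [hx, smul_eq_mul, ← mul_assoc, inv_mul_cancel₀ hc, one_mul]
  · intro y hy
    simp only [Finset.mem_filter, Finset.mem_univ, true_and] at hy ⊢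
    calc Algebra.trace (ZMod p) F (algebraMap (ZMod p) F c * y)
        = c • Algebra.trace (ZMod p) F y := by rw [← Algebra.smul_def, map_smul]
      _ = c * a := by rw [hy, smul_eq_mul]
  · intro x _; field_simp
  · intro y _; field_simp
  · intro x _
    rw [mul_inv, inv_inv, inv_mul_cancel_left₀ hcF]

private lemma fibSum_zero (hp : 2 < p) : fibSum p F 0 = 0 := by
  haveI : CharP F p := charP_of_injective_algebraMap (algebraMap (ZMod p) F).injective p
  have hndvd : ¬ p ∣ 2 := fun h => absurd (Nat.le_of_dvd (by norm_num) h) (by omega)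
  have hc : (2 : ZMod p) ≠ 0 := by
    have := (ZMod.natCast_eq_zero_iff 2 p).not.mpr hndvd
    simpa using this
  have h2F : (2 : F) ≠ 0 := by
    have := (CharP.cast_eq_zero_iff F p 2).not.mpr hndvd
    simpa using this
  have h := fibSum_smul p F 2 hc 0
  rw [mul_zero] at h
  have hmap : algebraMap (ZMod p) F 2 = (2 : F) := by
    rw [show ((2 : ZMod p)) = ((2 : ℕ) : ZMod p) by norm_num, map_natCast]
    norm_num
  rw [hmap] at h
  have h2 : (2 : F) * fibSum p F 0 = fibSum p F 0 := by
    conv_lhs => rw [h]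
    rw [← mul_assoc, mul_inv_cancel₀ h2F, one_mul]
  have : ((2 : F) - 1) * fibSum p F 0 = 0 := by rw [sub_mul, one_mul, h2, sub_self]
  norm_num at this
  exact this

private lemma sum_units_inv_trace :
    ∑ x : Fˣ, ((x : F)⁻¹ * algebraMap (ZMod p) F (Algebra.trace (ZMod p) F (x : F))) = -1 := by
  classical
  haveI : FiniteDimensional (ZMod p) F := Module.Finite.of_finite
  have key : ∀ σ : F ≃ₐ[ZMod p] F, ∑ x : Fˣ, ((x : F)⁻¹ * σ x)
      = if σ = AlgEquiv.refl then ((Fintype.card Fˣ : F)) else 0 := by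
    intro σ
    let φ : Fˣ →* F :=
      { toFun := fun x => (x : F)⁻¹ * σ x
        map_one' := by simp
        map_mul' := by
          intro x y
          push_cast
          rw [mul_inv, map_mul]
          ring }
    have h1 : (φ = 1) ↔ σ = AlgEquiv.refl := by
      constructor
      · intro hφ
        ext x
        rcases eq_or_ne x 0 with rfl | hx
        · simp
        · have := DFunLike.congr_fun hφ (Units.mk0 x hx)
          simp only [MonoidHom.one_apply, φ, MonoidHom.coe_mk, OneHom.coe_mk,
            Units.val_mk0] at this
          have hxinv : x⁻¹ * σ x = 1 := this
          have := congrArg (x * ·) hxinv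
          simpa [← mul_assoc, mul_inv_cancel₀ hx, hx] using this
      · rintro rfl
        ext x
        simp [φ, inv_mul_cancel₀ (Units.ne_zero x)]
    calc ∑ x : Fˣ, ((x : F)⁻¹ * σ x) = ∑ x : Fˣ, φ x := rfl
      _ = if φ = 1 then ((Fintype.card Fˣ : F)) else 0 := by
          rw [sum_hom_units φ, apply_ite (Nat.cast : ℕ → F), Nat.cast_zero]
      _ = _ := by rw [if_congr h1 rfl rfl]
  have hcard : ((Fintype.card Fˣ : F)) = -1 := by
    rw [Fintype.card_units, Nat.cast_sub Fintype.card_pos, FiniteField.cast_card_eq_zero,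
      Nat.cast_one, zero_sub]
  calc ∑ x : Fˣ, ((x : F)⁻¹ * algebraMap (ZMod p) F (Algebra.trace (ZMod p) F (x : F)))
      = ∑ x : Fˣ, ∑ σ : F ≃ₐ[ZMod p] F, ((x : F)⁻¹ * σ x) := by
        simp_rw [trace_eq_sum_automorphisms, Finset.mul_sum]
    _ = ∑ σ : F ≃ₐ[ZMod p] F, ∑ x : Fˣ, ((x : F)⁻¹ * σ x) := Finset.sum_comm
    _ = ∑ σ : F ≃ₐ[ZMod p] F, if σ = AlgEquiv.refl then ((Fintype.card Fˣ : F)) else 0 := by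
        exact Finset.sum_congr rfl fun σ _ => key σ
    _ = ((Fintype.card Fˣ : F)) := by rw [Finset.sum_ite_eq' _ _ (fun _ => _)]; simp
    _ = -1 := hcard

private lemma sum_all_inv_trace :
    ∑ x : F, x⁻¹ * algebraMap (ZMod p) F (Algebra.trace (ZMod p) F x) = -1 := by
  classical
  let φ : Fˣ ↪ F := ⟨fun x => x, fun _ _ h => Units.ext h⟩
  have himg : univ.map φ = univ \ {0} := by
    ext x
    simp only [mem_map, mem_univ, Function.Embedding.coeFn_mk, true_and, mem_sdiff,
      mem_singleton, φ]
    exact isUnit_iff_ne_zero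
  calc ∑ x : F, x⁻¹ * algebraMap (ZMod p) F (Algebra.trace (ZMod p) F x)
      = ∑ x ∈ univ \ {(0 : F)}, x⁻¹ * algebraMap (ZMod p) F (Algebra.trace (ZMod p) F x) := by
        rw [← Finset.sum_sdiff (Finset.subset_univ ({0} : Finset F)), Finset.sum_singleton,
          inv_zero, zero_mul, add_zero]
    _ = ∑ x : Fˣ, ((x : F)⁻¹ * algebraMap (ZMod p) F (Algebra.trace (ZMod p) F (x : F))) := by
        rw [← himg, Finset.sum_map]
        rfl
    _ = -1 := sum_units_inv_trace p F

private lemma fibSum_one : fibSum p F 1 = 1 := by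
  classical
  haveI : CharP F p := charP_of_injective_algebraMap (algebraMap (ZMod p) F).injective p
  have hfib : ∑ t : ZMod p, (fibSum p F t) * algebraMap (ZMod p) F t = -1 := by
    calc ∑ t : ZMod p, (fibSum p F t) * algebraMap (ZMod p) F t
        = ∑ t : ZMod p, ∑ x ∈ Finset.univ.filter
            (fun x : F => Algebra.trace (ZMod p) F x = t),
            x⁻¹ * algebraMap (ZMod p) F (Algebra.trace (ZMod p) F x) := by
          refine Finset.sum_congr rfl fun t _ => ?_
          rw [fibSum, Finset.sum_mul]
          refine Finset.sum_congr rfl fun x hx => ?_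
          rw [(Finset.mem_filter.1 hx).2]
      _ = ∑ x : F, x⁻¹ * algebraMap (ZMod p) F (Algebra.trace (ZMod p) F x) :=
          Finset.sum_fiberwise _ _ _
      _ = -1 := sum_all_inv_trace p F
  have hterm : ∀ t : ZMod p, (fibSum p F t) * algebraMap (ZMod p) F t
      = if t = 0 then 0 else fibSum p F 1 := by
    intro t
    rcases eq_or_ne t 0 with rfl | ht
    · simp
    · rw [if_neg ht]
      have : fibSum p F t = (algebraMap (ZMod p) F t)⁻¹ * fibSum p F 1 := by
        have := fibSum_smul p F t ht 1
        rwa [mul_one] at this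
      rw [this]
      have htF : algebraMap (ZMod p) F t ≠ 0 := by
        rw [Ne, map_eq_zero_iff _ (algebraMap (ZMod p) F).injective]; exact ht
      field_simp
  rw [Finset.sum_congr rfl (fun t _ => hterm t)] at hfib
  rw [Finset.sum_ite, Finset.sum_const_zero, zero_add, Finset.sum_const, nsmul_eq_mul] at hfib
  have hcardfilter : (Finset.univ.filter (fun t : ZMod p => ¬ t = 0)).card = p - 1 := by
    rw [Finset.filter_not, Finset.filter_eq']
    simp only [Finset.mem_univ, if_true]
    rw [Finset.card_sdiff_of_subset (Finset.singleton_subset_iff.mpr (Finset.mem_univ _)),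
      Finset.card_univ, ZMod.card, Finset.card_singleton]
  rw [hcardfilter] at hfib
  have hpcast : ((p - 1 : ℕ) : F) = -1 := by
    have h1 : 1 ≤ p := (Fact.out : p.Prime).one_lt.le
    rw [Nat.cast_sub h1, CharP.cast_eq_zero F p, Nat.cast_one, zero_sub]
  rw [hpcast] at hfib
  have := congrArg (fun z => -z) hfib
  simpa using this

end Aux

/-- For every `a ∈ 𝔽_p`,
`Σ_{λ ∈ F, Tr(λ) = a} λ⁻¹ = a⁻¹` in `F`; in particular the sum of the inverses of the
nonzero elements of trace `0` vanishes. -/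
theorem statement12 (p : ℕ) [Fact p.Prime] (hp : 2 < p)
    (F : Type*) [Field F] [Fintype F] [DecidableEq F] [Algebra (ZMod p) F] (a : ZMod p) :
    (∑ x ∈ Finset.univ.filter (fun x : F => Algebra.trace (ZMod p) F x = a), x⁻¹
        = (algebraMap (ZMod p) F a)⁻¹) ∧
    (∑ x ∈ Finset.univ.filter
        (fun x : F => Algebra.trace (ZMod p) F x = 0 ∧ x ≠ 0), x⁻¹ = 0) := by
  constructor
  · show fibSum p F a = _
    rcases eq_or_ne a 0 with rfl | ha
    · rw [fibSum_zero p F hp, map_zero, inv_zero]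
    · have h := fibSum_smul p F a ha 1
      rw [mul_one, fibSum_one p F, mul_one] at h
      exact h
  · have hsub : Finset.univ.filter (fun x : F => Algebra.trace (ZMod p) F x = 0 ∧ x ≠ 0)
        ⊆ Finset.univ.filter (fun x : F => Algebra.trace (ZMod p) F x = 0) := by
      intro x hx
      simp only [Finset.mem_filter, Finset.mem_univ, true_and] at hx ⊢
      exact hx.1
    have := Finset.sum_subset hsub (f := fun x : F => x⁻¹) ?_
    · rw [this]
      exact fibSum_zero p F hp
    · intro x hx hnx
      simp only [Finset.mem_filter, Finset.mem_univ, true_and, not_and, not_ne_iff] at hx hnx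
      simp [hnx hx]
end

section
/- The 𝔽-algebra homomorphism from the polynomial ring 𝔽[T_0,…,T_{f−1}] to the group algebra 𝔽[K] sending T_j to Y_j is surjective with kernel the ideal (T_0^p,…,T_{f−1}^p); i.e. it induces an isomorphism of 𝔽-algebras 𝔽[T_0,…,T_{f−1}]/(T_0^p,…,T_{f−1}^p) ≅ 𝔽[K]. (Paper: Lemma 'lem:basic'(i) in §3.2.2, identifying 𝔽[N_0/N_0^p] with 𝔽[K].) -/
/-!
Setup (§3.2.2 of the paper): `p > 2` is prime, `q = p^f`, `K` is a finite field with `q`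
elements, `𝔽` a field with a ring embedding `σ₀ : K → 𝔽`, and `σ_j(a) = σ₀(a)^{p^j}`.
`𝔽[K]` is the group algebra over `𝔽` of the additive group of `K`
(`AddMonoidAlgebra 𝔽 K`), with canonical basis `[a] = AddMonoidAlgebra.single a 1`, and
`Y_j = Σ_{a ∈ K^×} σ_j(a)^{−1} [a]`.
-/

namespace BHHMS

/-- `Y_j = Σ_{a ∈ K^×} σ_j(a)^{−1} [a] ∈ 𝔽[K]`, where `σ_j(a) = σ₀(a)^{p^j}`. -/
noncomputable def Yelt (p : ℕ) {K 𝔽 : Type*} [Field K] [Fintype K] [DecidableEq K] [Field 𝔽]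
    (σ₀ : K →+* 𝔽) (j : ℕ) : AddMonoidAlgebra 𝔽 K :=
  ∑ a : Kˣ, AddMonoidAlgebra.single ((a : K) : K) ((σ₀ (a : K) ^ p ^ j)⁻¹)

open Finset

set_option linter.unusedSectionVars false

variable {K 𝔽 : Type*} [Field K] [Fintype K] [DecidableEq K] [Field 𝔽]

theorem ama_add (x y : AddMonoidAlgebra 𝔽 K) (a : K) : (x + y).coeff a = x.coeff a + y.coeff a := rfl
theorem ama_smul (c : 𝔽) (x : AddMonoidAlgebra 𝔽 K) (a : K) : (c • x).coeff a = c * x.coeff a := rfl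

noncomputable def lam (σ₀ : K →+* 𝔽) (m : ℕ) : AddMonoidAlgebra 𝔽 K →ₗ[𝔽] 𝔽 where
  toFun x := ∑ a : K, x.coeff a * σ₀ a ^ m
  map_add' x y := by simp [ama_add, add_mul, Finset.sum_add_distrib]
  map_smul' c x := by simp [ama_smul, Finset.mul_sum, mul_assoc]

theorem lam_single (σ₀ : K →+* 𝔽) (m : ℕ) (a : K) (c : 𝔽) :
    lam σ₀ m (AddMonoidAlgebra.single a c) = c * σ₀ a ^ m := by
  simp only [lam, LinearMap.coe_mk, AddHom.coe_mk]
  rw [Finset.sum_eq_single a]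
  · simp
  · intro b _ hb
    have : (AddMonoidAlgebra.single a c : AddMonoidAlgebra 𝔽 K).coeff b = 0 :=
      Finsupp.single_eq_of_ne' (Ne.symm hb)
    rw [this, zero_mul]
  · simp

theorem lam_one (σ₀ : K →+* 𝔽) (m : ℕ) :
    lam σ₀ m (1 : AddMonoidAlgebra 𝔽 K) = if m = 0 then 1 else 0 := by
  rw [AddMonoidAlgebra.one_def, lam_single]
  rcases Nat.eq_zero_or_pos m with h | h
  · simp [h]
  · simp [Nat.pos_iff_ne_zero.mp h, zero_pow (Nat.pos_iff_ne_zero.mp h)]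

theorem lam_mul (σ₀ : K →+* 𝔽) (m : ℕ) (x y : AddMonoidAlgebra 𝔽 K) :
    lam σ₀ m (x * y)
      = ∑ k ∈ Finset.range (m + 1), (m.choose k : 𝔽) * (lam σ₀ k x * lam σ₀ (m - k) y) := by
  induction x using AddMonoidAlgebra.induction_linear with
  | zero => simp
  | add x x' hx hx' => simp [add_mul, map_add, hx, hx', mul_add, Finset.sum_add_distrib]
  | single a c =>
    induction y using AddMonoidAlgebra.induction_linear with
    | zero => simp
    | add y y' hy hy' => simp [mul_add, map_add, hy, hy', Finset.sum_add_distrib]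
    | single b d =>
      rw [AddMonoidAlgebra.single_mul_single, lam_single, map_add, add_pow]
      simp only [lam_single]
      rw [Finset.mul_sum]
      refine Finset.sum_congr rfl fun k hk => ?_
      ring

theorem units_sum (t k : ℕ) :
    (∑ u : Kˣ, ((u : K) ^ t)⁻¹ * (u : K) ^ k)
      = if ((Fintype.card K - 1 : ℕ) : ℤ) ∣ ((k : ℤ) - (t : ℤ)) then (-1 : K) else 0 := by
  have hcard : 1 < Fintype.card K := Fintype.one_lt_card
  have htle : t ≤ (Fintype.card K - 1) * t := Nat.le_mul_of_pos_left t (by omega)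
  have hstep : ∀ u : Kˣ, ((u : K) ^ t)⁻¹ * (u : K) ^ k
      = (u : K) ^ ((Fintype.card K - 1) * t - t + k) := by
    intro u
    have hu : (u : K) ≠ 0 := Units.ne_zero u
    have h2 : (u : K) ^ ((Fintype.card K - 1) * t) = 1 := by
      rw [pow_mul, FiniteField.pow_card_sub_one_eq_one _ hu, one_pow]
    have h3 : ((u : K) ^ t)⁻¹ = (u : K) ^ ((Fintype.card K - 1) * t - t) := by
      refine (eq_inv_of_mul_eq_one_left ?_).symm
      rw [← pow_add, Nat.sub_add_cancel htle, h2]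
    rw [h3, ← pow_add]
  rw [Finset.sum_congr rfl fun u _ => hstep u]
  have := FiniteField.sum_pow_units K ((Fintype.card K - 1) * t - t + k)
  rw [this]
  congr 1
  have hcast : (((Fintype.card K - 1) * t - t + k : ℕ) : ℤ)
      = ((Fintype.card K - 1 : ℕ) : ℤ) * t + ((k : ℤ) - (t : ℤ)) := by
    push_cast [Nat.cast_sub htle]
    ring
  rw [eq_iff_iff, ← Int.natCast_dvd_natCast, hcast, dvd_add_right (dvd_mul_right _ _)]

theorem lam_Yelt (p : ℕ) (σ₀ : K →+* 𝔽) (j k : ℕ) :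
    lam σ₀ k (Yelt p σ₀ j)
      = if ((Fintype.card K - 1 : ℕ) : ℤ) ∣ ((k : ℤ) - (p ^ j : ℕ)) then (-1 : 𝔽) else 0 := by
  rw [Yelt, map_sum]
  simp only [lam_single]
  have hstep : ∀ u : Kˣ, (σ₀ (u : K) ^ p ^ j)⁻¹ * σ₀ (u : K) ^ k
      = σ₀ (((u : K) ^ p ^ j)⁻¹ * (u : K) ^ k) := by
    intro u
    rw [map_mul, map_inv₀, map_pow, map_pow]
  rw [Finset.sum_congr rfl fun u _ => hstep u, ← map_sum, units_sum]
  rw [apply_ite σ₀, map_neg, map_one, map_zero]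

theorem choose_pow_modEq (p : ℕ) [Fact p.Prime] (j : ℕ) (m : ℕ) :
    Nat.choose m (p ^ j) ≡ m / p ^ j % p [MOD p] := by
  induction j generalizing m with
  | zero => simpa [Nat.choose_one_right] using (Nat.mod_modEq m p).symm
  | succ j ih =>
    have hp : 0 < p := (Fact.out : p.Prime).pos
    calc Nat.choose m (p ^ (j + 1))
        ≡ Nat.choose (m % p) (p ^ (j + 1) % p) * Nat.choose (m / p) (p ^ (j + 1) / p) [MOD p] :=
          Choose.choose_modEq_choose_mod_mul_choose_div_nat
      _ = Nat.choose (m / p) (p ^ j) := by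
          rw [pow_succ, Nat.mul_mod_left, Nat.choose_zero_right, one_mul,
            Nat.mul_div_cancel _ hp]
      _ ≡ (m / p) / p ^ j % p [MOD p] := ih _
      _ = m / p ^ (j + 1) % p := by rw [Nat.div_div_eq_div_mul, mul_comm, ← pow_succ]

/-- `Mdeg p f e = ∑_{j<f} e j * p^j`. -/
def Mdeg (p f : ℕ) (e : ℕ → ℕ) : ℕ := ∑ j ∈ Finset.range f, e j * p ^ j

theorem Mdeg_lt {p : ℕ} (hp : 1 < p) (f : ℕ) (e : ℕ → ℕ) (he : ∀ i, e i < p) :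
    Mdeg p f e < p ^ f := by
  induction f with
  | zero => simp [Mdeg]
  | succ f ih =>
    have h1 : e f * p ^ f ≤ (p - 1) * p ^ f :=
      Nat.mul_le_mul_right _ (by have := he f; omega)
    have h2 : (p - 1) * p ^ f + p ^ f = p ^ (f + 1) := by
      rw [pow_succ]
      have hpos : 0 < p ^ f := Nat.pow_pos (by omega)
      rw [Nat.sub_one_mul]
      have h2a : p ^ f ≤ p * p ^ f := Nat.le_mul_of_pos_left _ (by omega)
      have h2b : p * p ^ f = p ^ f * p := mul_comm _ _
      omega
    have h3 : Mdeg p (f + 1) e = Mdeg p f e + e f * p ^ f := by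
      rw [Mdeg, Finset.sum_range_succ]; rfl
    omega

theorem Mdeg_digit {p : ℕ} (hp : 1 < p) (f : ℕ) (e : ℕ → ℕ) (he : ∀ i, e i < p) (j : ℕ) :
    Mdeg p f e / p ^ j % p = if j < f then e j else 0 := by
  induction f with
  | zero => simp [Mdeg, Nat.zero_div]
  | succ f ih =>
    have h3 : Mdeg p (f + 1) e = Mdeg p f e + e f * p ^ f := by
      rw [Mdeg, Finset.sum_range_succ]; rfl
    have hppos : 0 < p := by omega
    rcases lt_trichotomy j f with hj | hj | hj
    · have hfj : e f * p ^ f = e f * p ^ (f - j - 1) * p * p ^ j := by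
        rw [mul_assoc, mul_assoc, ← pow_succ', ← pow_add]
        congr 2
        omega
      rw [h3, hfj, Nat.add_mul_div_right _ _ (Nat.pow_pos hppos),
        Nat.add_mul_mod_self_right, ih, if_pos hj, if_pos (by omega)]
    · subst hj
      have hlt := Mdeg_lt hp j e he
      rw [h3, Nat.add_mul_div_right _ _ (Nat.pow_pos hppos),
        Nat.div_eq_of_lt hlt, zero_add, Nat.mod_eq_of_lt (he j), if_pos (by omega)]
    · have hlt : Mdeg p (f + 1) e < p ^ j := by
        calc Mdeg p (f + 1) e < p ^ (f + 1) := Mdeg_lt hp (f + 1) e he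
        _ ≤ p ^ j := Nat.pow_le_pow_right (by omega) (by omega)
      rw [Nat.div_eq_of_lt hlt, Nat.zero_mod, if_neg (by omega)]

theorem Mdeg_eq_zero_iff {p f : ℕ} (hp : 0 < p) (e : ℕ → ℕ) :
    Mdeg p f e = 0 ↔ ∀ j < f, e j = 0 := by
  rw [Mdeg, Finset.sum_eq_zero_iff]
  constructor
  · intro h j hj
    have := h j (Finset.mem_range.mpr hj)
    have hpow : 0 < p ^ j := Nat.pow_pos hp
    rcases Nat.mul_eq_zero.mp this with h | h
    · exact h
    · exact absurd h (by positivity)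
  · intro h j hj
    rw [h j (Finset.mem_range.mp hj), zero_mul]

theorem pow_add_one_lt {p f : ℕ} (hp : 2 < p) (j : ℕ) (hj : j < f) : p ^ j + 1 < p ^ f := by
  have h1 : p ^ (j + 1) ≤ p ^ f := Nat.pow_le_pow_right (by omega) (by omega)
  have h2 : p ^ (j + 1) = p * p ^ j := by rw [pow_succ, mul_comm]
  have h3 : 0 < p ^ j := Nat.pow_pos (by omega)
  have h4 : 3 * p ^ j ≤ p * p ^ j := Nat.mul_le_mul_right _ (by omega)
  omega

theorem lam_mul_Yelt {p f : ℕ} (hp : 2 < p) (σ₀ : K →+* 𝔽)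
    (hq : Fintype.card K = p ^ f) (j : ℕ) (hj : j < f) (m : ℕ) (hm : m ≤ p ^ f - 1)
    (Z : AddMonoidAlgebra 𝔽 K) :
    lam σ₀ m (Yelt p σ₀ j * Z)
      = -((m.choose (p ^ j) : 𝔽) * lam σ₀ (m - p ^ j) Z) := by
  have hjlt : p ^ j + 1 < p ^ f := pow_add_one_lt hp j hj
  have hpj : 0 < p ^ j := Nat.pow_pos (by omega)
  have hzero : ∀ k ∈ Finset.range (m + 1), k ≠ p ^ j →
      (m.choose k : 𝔽) * (lam σ₀ k (Yelt p σ₀ j) * lam σ₀ (m - k) Z) = 0 := by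
    intro k hk hkne
    rw [lam_Yelt, if_neg, zero_mul, mul_zero]
    intro hdvd
    have h0 : ((k : ℤ) - (p ^ j : ℕ)) = 0 := by
      refine Int.eq_zero_of_dvd_of_natAbs_lt_natAbs hdvd ?_
      have hk' : k ≤ m := Nat.lt_succ_iff.mp (Finset.mem_range.mp hk)
      rw [hq]
      omega
    have : k = p ^ j := by exact_mod_cast sub_eq_zero.mp h0
    exact hkne this
  rcases le_or_gt (p ^ j) m with hle | hlt
  · rw [lam_mul, Finset.sum_eq_single_of_mem (p ^ j) (Finset.mem_range.mpr (by omega)) hzero,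
      lam_Yelt, if_pos (by simp), ]
    ring
  · rw [lam_mul, Finset.sum_eq_zero fun k hk => hzero k hk (by have := Finset.mem_range.mp hk; omega),
      Nat.choose_eq_zero_of_lt hlt]
    simp

theorem charP_K {p f : ℕ} [Fact p.Prime] (hf : 1 ≤ f) (hq : Fintype.card K = p ^ f) :
    CharP K p := by
  have hr : (ringChar K).Prime := CharP.char_is_prime K (ringChar K)
  obtain ⟨n, -, hn⟩ := FiniteField.card K (ringChar K)
  have hpr : p = ringChar K := by
    have hdvd : p ∣ ringChar K ^ (n : ℕ) := by
      rw [← hn, hq]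
      exact dvd_pow_self p (by omega)
    exact ((Nat.prime_dvd_prime_iff_eq (Fact.out) hr).mp
      ((Fact.out : p.Prime).dvd_of_dvd_pow hdvd))
  rw [hpr]
  exact ringChar.charP K

theorem card_sub_one_not_dvd_pow {p f : ℕ} [Fact p.Prime] (hp : 2 < p) (hf : 1 ≤ f) (i : ℕ)
    (hi : 1 ≤ i) : ¬ (p ^ f - 1) ∣ p ^ i := by
  intro hdvd
  have hp3 : 3 ≤ p := hp
  have hpf : p ≤ p ^ f := Nat.le_self_pow (by omega) p
  obtain ⟨t, ht, hteq⟩ := (Nat.dvd_prime_pow (Fact.out : p.Prime)).mp hdvd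
  rcases Nat.eq_zero_or_pos t with h0 | hpos
  · rw [h0, pow_zero] at hteq; omega
  · have h1 : p ∣ p ^ t := dvd_pow_self p (by omega)
    have h2 : p ∣ p ^ f := dvd_pow_self p (by omega)
    rw [← hteq] at h1
    have h3 : p ∣ p ^ f - (p ^ f - 1) := Nat.dvd_sub h2 h1
    have h4 : p ^ f - (p ^ f - 1) = 1 := by omega
    rw [h4] at h3
    exact absurd (Nat.le_of_dvd one_pos h3) (by omega)

theorem Yelt_pow_p {p f : ℕ} [Fact p.Prime] (hp : 2 < p) (hf : 1 ≤ f) (σ₀ : K →+* 𝔽)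
    (hq : Fintype.card K = p ^ f) (j : ℕ) : Yelt p σ₀ j ^ p = 0 := by
  haveI hK : CharP K p := charP_K hf hq
  haveI hF : CharP 𝔽 p := charP_of_injective_ringHom σ₀.injective p
  haveI : CharP (AddMonoidAlgebra 𝔽 K) p := by
    refine charP_of_injective_algebraMap (R := 𝔽) ?_ p
    intro a b hab
    rw [AddMonoidAlgebra.coe_algebraMap] at hab
    simpa using hab
  haveI : ExpChar (AddMonoidAlgebra 𝔽 K) p := ExpChar.prime (Fact.out)
  rw [Yelt, sum_pow_char]
  have hsm : ∀ a : Kˣ,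
      (AddMonoidAlgebra.single ((a : K) : K) ((σ₀ (a : K) ^ p ^ j)⁻¹)
        : AddMonoidAlgebra 𝔽 K) ^ p
      = AddMonoidAlgebra.single (0 : K) ((σ₀ (a : K) ^ p ^ (j + 1))⁻¹) := by
    intro a
    rw [AddMonoidAlgebra.single_pow]
    congr 1
    · have : ((p : K)) = 0 := CharP.cast_eq_zero K p
      rw [nsmul_eq_mul, this, zero_mul]
    · rw [inv_pow, ← pow_mul, ← pow_succ]
  rw [Finset.sum_congr rfl fun a _ => hsm a, show (∑ a : Kˣ, AddMonoidAlgebra.single (0 : K) ((σ₀ (a : K) ^ p ^ (j + 1))⁻¹) : AddMonoidAlgebra 𝔽 K) = AddMonoidAlgebra.single 0 (∑ a : Kˣ, (σ₀ (a : K) ^ p ^ (j + 1))⁻¹) from (map_sum (AddMonoidAlgebra.singleAddHom (0 : K)) _ _).symm]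
  have hcoe : (∑ a : Kˣ, (σ₀ (a : K) ^ p ^ (j + 1))⁻¹) = 0 := by
    have hstep : ∀ u : Kˣ, (σ₀ (u : K) ^ p ^ (j + 1))⁻¹
        = σ₀ (((u : K) ^ p ^ (j + 1))⁻¹ * (u : K) ^ 0) := by
      intro u
      rw [pow_zero, mul_one, map_inv₀, map_pow]
    rw [Finset.sum_congr rfl fun u _ => hstep u, ← map_sum, units_sum]
    rw [if_neg, map_zero]
    intro hdvd
    rw [hq] at hdvd
    have h1 : ((p ^ f - 1 : ℕ) : ℤ) ∣ ((p ^ (j + 1) : ℕ) : ℤ) := by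
      have : ((0 : ℕ) : ℤ) - ((p ^ (j + 1) : ℕ) : ℤ) = -((p ^ (j + 1) : ℕ) : ℤ) := by ring
      rw [this, dvd_neg] at hdvd
      exact hdvd
    rw [Int.natCast_dvd_natCast] at h1
    exact card_sub_one_not_dvd_pow hp hf (j + 1) (by omega) h1
  rw [hcoe, AddMonoidAlgebra.single_zero]

/-- The monomial `∏_{j<f} Y_j^{e j}`. -/
noncomputable def Ymon (p f : ℕ) (σ₀ : K →+* 𝔽) (e : ℕ → ℕ) : AddMonoidAlgebra 𝔽 K :=
  ∏ j ∈ Finset.range f, Yelt p σ₀ j ^ e j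

theorem lam_Ymon {p f : ℕ} [Fact p.Prime] (hp : 2 < p) (hf : 1 ≤ f) (σ₀ : K →+* 𝔽)
    (hq : Fintype.card K = p ^ f) (n : ℕ) :
    ∀ e e' : ℕ → ℕ, (∀ i, e i < p) → (∀ i, e' i < p) →
    (∑ j ∈ Finset.range f, e j) = n →
    lam σ₀ (Mdeg p f e') (Ymon p f σ₀ e)
      = if (∀ j < f, e' j = e j)
          then (-1 : 𝔽) ^ n * ((∏ j ∈ Finset.range f, (e j).factorial : ℕ) : 𝔽)
          else 0 := by
  haveI hK : CharP K p := charP_K hf hq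
  haveI hF : CharP 𝔽 p := charP_of_injective_ringHom σ₀.injective p
  have hp1 : 1 < p := by omega
  induction n with
  | zero =>
    intro e e' he he' hsum
    have hez : ∀ j ∈ Finset.range f, e j = 0 := by
      intro j hj
      exact (Finset.sum_eq_zero_iff).mp hsum j hj
    have hY : Ymon p f σ₀ e = 1 := by
      rw [Ymon]
      exact Finset.prod_eq_one fun j hj => by rw [hez j hj, pow_zero]
    rw [hY, lam_one]
    have hcond : Mdeg p f e' = 0 ↔ ∀ j < f, e' j = e j := by
      rw [Mdeg_eq_zero_iff (by omega) e']
      constructor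
      · intro h j hj; rw [h j hj, hez j (Finset.mem_range.mpr hj)]
      · intro h j hj; rw [h j hj, hez j (Finset.mem_range.mpr hj)]
    by_cases hc : ∀ j < f, e' j = e j
    · rw [if_pos (hcond.mpr hc), if_pos hc, pow_zero, one_mul]
      have hfact : (∏ j ∈ Finset.range f, (e j).factorial) = 1 :=
        Finset.prod_eq_one fun j hj => by rw [hez j hj]; rfl
      rw [hfact, Nat.cast_one]
    · rw [if_neg (fun h => hc (hcond.mp h)), if_neg hc]
  | succ n ih =>
    intro e e' he he' hsum
    have hex : ∃ j0 ∈ Finset.range f, e j0 ≠ 0 := by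
      by_contra hcon
      push_neg at hcon
      rw [Finset.sum_eq_zero hcon] at hsum
      omega
    obtain ⟨j0, hj0mem, hj0⟩ := hex
    have hj0f : j0 < f := Finset.mem_range.mp hj0mem
    set e₁ : ℕ → ℕ := Function.update e j0 (e j0 - 1) with he₁def
    have he₁ : ∀ i, e₁ i < p := by
      intro i
      rw [he₁def]
      by_cases hi : i = j0
      · subst hi; rw [Function.update_self]; have := he i; omega
      · rw [Function.update_of_ne hi]; exact he i
    have hprod_erase : ∀ (g : ℕ → ℕ), (∀ j ∈ (Finset.range f).erase j0, g j = e₁ j) → True := fun _ _ => trivial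
    have hsplit : Ymon p f σ₀ e = Yelt p σ₀ j0 * Ymon p f σ₀ e₁ := by
      rw [Ymon, Ymon, ← Finset.mul_prod_erase _ _ hj0mem, ← Finset.mul_prod_erase _ (fun j => Yelt p σ₀ j ^ e₁ j) hj0mem]
      have h1 : ∏ j ∈ (Finset.range f).erase j0, Yelt p σ₀ j ^ e₁ j
          = ∏ j ∈ (Finset.range f).erase j0, Yelt p σ₀ j ^ e j := by
        refine Finset.prod_congr rfl fun j hj => ?_
        rw [he₁def, Function.update_of_ne (Finset.ne_of_mem_erase hj)]
      rw [h1, ← mul_assoc, he₁def, Function.update_self, ← pow_succ']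
      congr 2
      omega
    have hmle : Mdeg p f e' ≤ p ^ f - 1 := by
      have := Mdeg_lt hp1 f e' he'
      omega
    rw [hsplit, lam_mul_Yelt hp σ₀ hq j0 hj0f _ hmle]
    have hchoose : ((Mdeg p f e').choose (p ^ j0) : 𝔽) = (e' j0 : 𝔽) := by
      have h1 := choose_pow_modEq p j0 (Mdeg p f e')
      have h2 : Mdeg p f e' / p ^ j0 % p = e' j0 := by
        rw [Mdeg_digit hp1 f e' he' j0, if_pos hj0f]
      rw [h2] at h1
      exact CharP.natCast_eq_natCast' 𝔽 p h1
    rw [hchoose]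
    by_cases hz : e' j0 = 0
    · rw [hz]
      have hcnd : ¬ (∀ j < f, e' j = e j) := by
        intro h
        exact hj0 (by rw [← h j0 hj0f, hz])
      rw [if_neg hcnd]
      simp
    · set e₁' : ℕ → ℕ := Function.update e' j0 (e' j0 - 1) with he₁'def
      have he₁' : ∀ i, e₁' i < p := by
        intro i
        rw [he₁'def]
        by_cases hi : i = j0
        · subst hi; rw [Function.update_self]; have := he' i; omega
        · rw [Function.update_of_ne hi]; exact he' i
      have hMd : Mdeg p f e' - p ^ j0 = Mdeg p f e₁' := by
        have h1 : Mdeg p f e' = e' j0 * p ^ j0 + ∑ j ∈ (Finset.range f).erase j0, e' j * p ^ j := by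
          rw [Mdeg, ← Finset.add_sum_erase _ _ hj0mem]
        have h2 : Mdeg p f e₁' = (e' j0 - 1) * p ^ j0
            + ∑ j ∈ (Finset.range f).erase j0, e' j * p ^ j := by
          rw [Mdeg, ← Finset.add_sum_erase _ (fun j => e₁' j * p ^ j) hj0mem, he₁'def,
            Function.update_self]
          congr 1
          refine Finset.sum_congr rfl fun j hj => ?_
          rw [Function.update_of_ne (Finset.ne_of_mem_erase hj)]
        have h3 : e' j0 * p ^ j0 = (e' j0 - 1) * p ^ j0 + p ^ j0 := by
          rw [Nat.sub_one_mul]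
          have : p ^ j0 ≤ e' j0 * p ^ j0 := Nat.le_mul_of_pos_left _ (by omega)
          omega
        omega
      have hsum₁ : (∑ j ∈ Finset.range f, e₁ j) = n := by
        have h1 : (∑ j ∈ Finset.range f, e j)
            = e j0 + ∑ j ∈ (Finset.range f).erase j0, e j := by
          rw [← Finset.add_sum_erase _ _ hj0mem]
        have h2 : (∑ j ∈ Finset.range f, e₁ j)
            = (e j0 - 1) + ∑ j ∈ (Finset.range f).erase j0, e j := by
          rw [← Finset.add_sum_erase _ e₁ hj0mem, he₁def, Function.update_self]
          congr 1
          refine Finset.sum_congr rfl fun j hj => ?_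
          rw [Function.update_of_ne (Finset.ne_of_mem_erase hj)]
        omega
      rw [hMd, ih e₁ e₁' he₁ he₁' hsum₁]
      have hcnd : (∀ j < f, e₁' j = e₁ j) ↔ (∀ j < f, e' j = e j) := by
        constructor
        · intro h j hj
          by_cases hjj : j = j0
          · subst hjj
            have := h j hj
            rw [he₁'def, he₁def, Function.update_self, Function.update_self] at this
            omega
          · have := h j hj
            rwa [he₁'def, he₁def, Function.update_of_ne hjj, Function.update_of_ne hjj] at this
        · intro h j hj
          by_cases hjj : j = j0
          · subst hjj
            rw [he₁'def, he₁def, Function.update_self, Function.update_self, h j hj]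
          · rw [he₁'def, he₁def, Function.update_of_ne hjj, Function.update_of_ne hjj]
            exact h j hj
      by_cases hc : ∀ j < f, e' j = e j
      · rw [if_pos (hcnd.mpr hc), if_pos hc]
        have hee : e' j0 = e j0 := hc j0 hj0f
        have hfact : e j0 * (∏ j ∈ Finset.range f, (e₁ j).factorial)
            = ∏ j ∈ Finset.range f, (e j).factorial := by
          rw [← Finset.mul_prod_erase _ (fun j => (e₁ j).factorial) hj0mem,
            ← Finset.mul_prod_erase _ (fun j => (e j).factorial) hj0mem]
          have h1 : ∏ j ∈ (Finset.range f).erase j0, (e₁ j).factorial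
              = ∏ j ∈ (Finset.range f).erase j0, (e j).factorial := by
            refine Finset.prod_congr rfl fun j hj => ?_
            rw [he₁def, Function.update_of_ne (Finset.ne_of_mem_erase hj)]
          rw [h1, ← mul_assoc, he₁def, Function.update_self,
            Nat.mul_factorial_pred (by omega)]
        rw [hee]
        push_cast [← hfact]
        ring
      · rw [if_neg (fun h => hc (hcnd.mp h)), if_neg hc]
        simp

theorem sum_Ymon_eq_zero {p f : ℕ} [Fact p.Prime] (hp : 2 < p) (hf : 1 ≤ f) (σ₀ : K →+* 𝔽)
    (hq : Fintype.card K = p ^ f) {ι : Type*} [DecidableEq ι] (S : Finset ι) (E : ι → ℕ → ℕ)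
    (hE : ∀ i ∈ S, ∀ k, E i k < p)
    (hinj : ∀ i ∈ S, ∀ i' ∈ S, (∀ j < f, E i j = E i' j) → i = i')
    (c : ι → 𝔽) (hsum : (∑ i ∈ S, c i • Ymon p f σ₀ (E i)) = 0) :
    ∀ i ∈ S, c i = 0 := by
  haveI hKp : CharP K p := charP_K hf hq
  haveI hF : CharP 𝔽 p := charP_of_injective_ringHom σ₀.injective p
  intro i0 hi0
  have h1 := congrArg (lam σ₀ (Mdeg p f (E i0))) hsum
  rw [map_sum, map_zero] at h1
  have h2 : ∀ i ∈ S, i ≠ i0 → lam σ₀ (Mdeg p f (E i0)) (c i • Ymon p f σ₀ (E i)) = 0 := by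
    intro i hi hne
    rw [map_smul, lam_Ymon hp hf σ₀ hq _ (E i) (E i0) (hE i hi) (hE i0 hi0) rfl, if_neg,
      smul_zero]
    intro hcond
    exact hne ((hinj i0 hi0 i hi hcond).symm)
  rw [Finset.sum_eq_single_of_mem i0 hi0 h2, map_smul,
    lam_Ymon hp hf σ₀ hq _ (E i0) (E i0) (hE i0 hi0) (hE i0 hi0) rfl,
    if_pos (fun j _ => rfl), smul_eq_mul] at h1
  have hU : ((-1 : 𝔽) ^ (∑ j ∈ Finset.range f, E i0 j)
      * ((∏ j ∈ Finset.range f, (E i0 j).factorial : ℕ) : 𝔽)) ≠ 0 := by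
    apply mul_ne_zero
    · exact pow_ne_zero _ (by norm_num)
    · rw [Nat.cast_prod]
      refine Finset.prod_ne_zero_iff.mpr fun j hj => ?_
      rw [Ne, CharP.cast_eq_zero_iff 𝔽 p]
      intro hdvd
      exact absurd ((Nat.Prime.dvd_factorial Fact.out).mp hdvd)
        (by have := hE i0 hi0 j; omega)
  exact (mul_eq_zero.mp h1).resolve_right hU

end BHHMS

namespace BHHMS


/-- Lemma `lem:basic`(i), §3.2.2, identifying `𝔽[N_0/N_0^p]` with
`𝔽[K]`.  The `𝔽`-algebra map `𝔽[T_0,…,T_{f−1}] → 𝔽[K]`, `T_j ↦ Y_j`, is surjective with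
kernel `(T_0^p, …, T_{f−1}^p)`. -/
theorem statement14 (p f : ℕ) [Fact p.Prime] (hp : 2 < p) (hf : 1 ≤ f)
    (K : Type*) [Field K] [Fintype K] [DecidableEq K] (hK : Fintype.card K = p ^ f)
    (𝔽 : Type*) [Field 𝔽] (σ₀ : K →+* 𝔽) :
    Function.Surjective
      ⇑(MvPolynomial.aeval (R := 𝔽) (fun j : Fin f => Yelt p σ₀ (j : ℕ)) :
        MvPolynomial (Fin f) 𝔽 →ₐ[𝔽] AddMonoidAlgebra 𝔽 K) ∧
    RingHom.ker
        (MvPolynomial.aeval (R := 𝔽) (fun j : Fin f => Yelt p σ₀ (j : ℕ)) :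
          MvPolynomial (Fin f) 𝔽 →ₐ[𝔽] AddMonoidAlgebra 𝔽 K)
      = Ideal.span (Set.range fun j : Fin f => (MvPolynomial.X j : MvPolynomial (Fin f) 𝔽) ^ p) := by
  classical
  set φ : MvPolynomial (Fin f) 𝔽 →ₐ[𝔽] AddMonoidAlgebra 𝔽 K :=
    MvPolynomial.aeval (R := 𝔽) (fun j : Fin f => Yelt p σ₀ (j : ℕ)) with hφdef
  set I : Ideal (MvPolynomial (Fin f) 𝔽) :=
    Ideal.span (Set.range fun j : Fin f => (MvPolynomial.X j : MvPolynomial (Fin f) 𝔽) ^ p)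
    with hIdef
  -- the extension of a `Fin f`-indexed exponent vector to `ℕ`
  have hdext : True := trivial
  -- `φ` kills `I`
  have hIker : I ≤ RingHom.ker φ := by
    rw [hIdef, Ideal.span_le]
    rintro - ⟨j, rfl⟩
    rw [SetLike.mem_coe, RingHom.mem_ker, map_pow, MvPolynomial.aeval_X]
    exact Yelt_pow_p hp hf σ₀ hK (j : ℕ)
  -- computing `φ` on monomials
  have hmon : ∀ (d : Fin f →₀ ℕ) (c : 𝔽),
      φ (MvPolynomial.monomial d c)
        = c • Ymon p f σ₀ (fun i => if h : i < f then d ⟨i, h⟩ else 0) := by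
    intro d c
    rw [hφdef, MvPolynomial.aeval_monomial, Algebra.smul_def]
    congr 1
    rw [Finsupp.prod_fintype _ _ (fun i => pow_zero _)]
    rw [Ymon, ← Fin.prod_univ_eq_prod_range (fun i => Yelt p σ₀ i ^ (if h : i < f then d ⟨i, h⟩ else 0)) f]
    refine Finset.prod_congr rfl fun i _ => ?_
    rw [dif_pos i.isLt]
  -- surjectivity
  have hsurj : Function.Surjective ⇑φ := by
    set b : (Fin f → Fin p) → AddMonoidAlgebra 𝔽 K :=
      fun e => Ymon p f σ₀ (fun i => if h : i < f then (e ⟨i, h⟩ : ℕ) else 0) with hbdef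
    have hbE : ∀ (e : Fin f → Fin p), ∀ k, (fun i => if h : i < f then (e ⟨i, h⟩ : ℕ) else 0) k < p := by
      intro e k
      by_cases h : k < f
      · simp only [dif_pos h]
        exact (e ⟨k, h⟩).isLt
      · simp only [dif_neg h]
        omega
    have hbind : LinearIndependent 𝔽 b := by
      rw [Fintype.linearIndependent_iff]
      intro g hg e0
      refine sum_Ymon_eq_zero hp hf σ₀ hK Finset.univ _ (fun e _ => hbE e) ?_ g hg e0
        (Finset.mem_univ e0)
      intro e _ e' _ hcond
      funext i
      have := hcond (i : ℕ) i.isLt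
      simp only [dif_pos i.isLt, Fin.eta] at this
      exact Fin.val_injective this
    have hrank : Fintype.card (Fin f → Fin p) = Module.finrank 𝔽 (AddMonoidAlgebra 𝔽 K) := by
      rw [Fintype.card_fun, Fintype.card_fin, Fintype.card_fin]
      rw [show Module.finrank 𝔽 (AddMonoidAlgebra 𝔽 K) = Module.finrank 𝔽 (K →₀ 𝔽) from (AddMonoidAlgebra.coeffLinearEquiv 𝔽).finrank_eq,
        Module.finrank_finsupp_self, hK]
    have hspan := hbind.span_eq_top_of_card_eq_finrank hrank
    have hble : ∀ e, b e ∈ φ.range := by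
      intro e
      refine ⟨∏ j : Fin f, MvPolynomial.X j ^ ((e j : ℕ)), ?_⟩
      have h1 : φ (∏ j : Fin f, MvPolynomial.X j ^ ((e j : ℕ)))
          = ∏ j : Fin f, Yelt p σ₀ (j : ℕ) ^ ((e j : ℕ)) := by
        rw [hφdef]
        simp only [map_prod, map_pow, MvPolynomial.aeval_X]
      show φ (∏ j : Fin f, MvPolynomial.X j ^ ((e j : ℕ))) = b e
      rw [h1]
      simp only [hbdef]
      rw [Ymon, ← Fin.prod_univ_eq_prod_range
        (fun i => Yelt p σ₀ i ^ (if h : i < f then (e ⟨i, h⟩ : ℕ) else 0)) f]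
      refine Finset.prod_congr rfl fun i _ => ?_
      simp only [dif_pos i.isLt, Fin.eta]
    intro x
    have hx : x ∈ Submodule.span 𝔽 (Set.range b) := by rw [hspan]; trivial
    have hle : Submodule.span 𝔽 (Set.range b) ≤ Subalgebra.toSubmodule φ.range := by
      rw [Submodule.span_le]
      rintro - ⟨e, rfl⟩
      exact hble e
    exact hle hx
  refine ⟨hsurj, le_antisymm ?_ hIker⟩
  -- kernel ⊆ I
  intro P hP
  set Slow : Finset (Fin f →₀ ℕ) := P.support.filter (fun d => ∀ j, d j < p) with hSlowdef
  set Plow : MvPolynomial (Fin f) 𝔽 :=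
    ∑ d ∈ Slow, MvPolynomial.monomial d (MvPolynomial.coeff d P) with hPlowdef
  have hhigh : P - Plow ∈ I := by
    have hsplit : P = Plow + ∑ d ∈ P.support.filter (fun d => ¬ ∀ j, d j < p),
        MvPolynomial.monomial d (MvPolynomial.coeff d P) := by
      rw [hPlowdef, hSlowdef, Finset.sum_filter_add_sum_filter_not,
        MvPolynomial.support_sum_monomial_coeff]
    have hterm : ∀ d ∈ P.support.filter (fun d => ¬ ∀ j, d j < p),
        MvPolynomial.monomial d (MvPolynomial.coeff d P) ∈ I := by
      intro d hd
      obtain ⟨j0, hj0⟩ : ∃ j0, p ≤ d j0 := by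
        have := (Finset.mem_filter.mp hd).2
        push_neg at this
        obtain ⟨j0, hj0⟩ := this
        exact ⟨j0, hj0⟩
      have heq : MvPolynomial.monomial d (MvPolynomial.coeff d P)
          = MvPolynomial.X j0 ^ p * MvPolynomial.monomial (d - Finsupp.single j0 p)
              (MvPolynomial.coeff d P) := by
        rw [MvPolynomial.X_pow_eq_monomial, MvPolynomial.monomial_mul, one_mul,
          add_tsub_cancel_of_le (Finsupp.single_le_iff.mpr hj0)]
      rw [heq]
      exact Ideal.mul_mem_right _ _ (Ideal.subset_span ⟨j0, rfl⟩)
    rw [hsplit, add_sub_cancel_left]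
    exact Ideal.sum_mem _ hterm
  have hPlow0 : φ Plow = 0 := by
    have h1 : φ P = 0 := hP
    have h2 : φ (P - Plow) = 0 := hIker hhigh
    rw [map_sub, h1, zero_sub, neg_eq_zero] at h2
    exact h2.symm ▸ rfl
  have hcoeffs : ∀ d ∈ Slow, MvPolynomial.coeff d P = 0 := by
    refine sum_Ymon_eq_zero hp hf σ₀ hK Slow
      (fun d i => if h : i < f then d ⟨i, h⟩ else 0) ?_ ?_ (fun d => MvPolynomial.coeff d P) ?_
    · intro d hd k
      by_cases h : k < f
      · simp only [dif_pos h]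
        exact (Finset.mem_filter.mp hd).2 ⟨k, h⟩
      · simp only [dif_neg h]
        omega
    · intro d _ d' _ hcond
      ext i
      have := hcond (i : ℕ) i.isLt
      simp only [dif_pos i.isLt, Fin.eta] at this
      exact this
    · rw [← hPlow0, hPlowdef, map_sum]
      exact Finset.sum_congr rfl fun d _ => (hmon d _).symm
  have hPlowz : Plow = 0 := by
    rw [hPlowdef]
    exact Finset.sum_eq_zero fun d hd => by rw [hcoeffs d hd, map_zero]
  have : P = P - Plow := by rw [hPlowz, sub_zero]
  rw [this]
  exact hhigh


end BHHMS
end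

section
/- Assume f > 1. Then in the group algebra 𝔽[K] one has Σ_{λ ∈ K, Tr_{K/𝔽_p}(λ) = 0} [λ] = (−1)^{f−1} ( ∏_{j=0}^{f−1} Y_j^{p−1} + Σ_{(i_0,…,i_{f−1})} ∏_{j=0}^{f−1} Y_j^{i_j} ), where the last sum runs over all tuples (i_0,…,i_{f−1}) with 0 ≤ i_j ≤ p−1 for all j and Σ_{j=0}^{f−1} i_j = (p−1)(f−1). (Paper: Lemma 'lem:tr0' in §3.2.2.) -/
/-!
Setup (§3.2.2 of the paper): `p > 2` is prime, `q = p^f`, `K` is a finite field with `q`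
elements, `𝔽` a field with a ring embedding `σ₀ : K → 𝔽`, and `σ_j(a) = σ₀(a)^{p^j}`.
`𝔽[K]` is the group algebra over `𝔽` of the additive group of `K`
(`AddMonoidAlgebra 𝔽 K`), with canonical basis `[a] = AddMonoidAlgebra.single a 1`, and
`Y_j = Σ_{a ∈ K^×} σ_j(a)^{−1} [a]`.
-/

namespace BHHMS

section Aux
set_option linter.unusedSectionVars false
open Finset
variable {p : ℕ} [hp : Fact p.Prime]
variable {K : Type*} [Field K] [Fintype K] [DecidableEq K]
variable {𝔽 : Type*} [Field 𝔽]
local notation "q" => Fintype.card K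
noncomputable def S (σ₀ : K →+* 𝔽) (m : ℕ) : AddMonoidAlgebra 𝔽 K :=
  ∑ a : K, AddMonoidAlgebra.single a (σ₀ a ^ m)
lemma sum_units_eq {M : Type*} [AddCommMonoid M] (g : K → M) (h0 : g 0 = 0) :
    ∑ u : Kˣ, g (u : K) = ∑ a : K, g a := by
  classical
  rw [← Finset.add_sum_erase _ _ (Finset.mem_univ (0 : K)), h0, zero_add]
  apply Finset.sum_bij (fun (u : Kˣ) _ => (u : K))
  · intro u _; exact Finset.mem_erase.2 ⟨u.ne_zero, Finset.mem_univ _⟩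
  · intro u _ v _ h; exact Units.ext h
  · intro a ha
    exact ⟨Units.mk0 a (Finset.mem_erase.1 ha).1, Finset.mem_univ _, rfl⟩
  · intro u _; rfl
lemma sum_units_pow (σ₀ : K →+* 𝔽) (N : ℕ) :
    ∑ u : Kˣ, σ₀ (u : K) ^ N = if (q - 1) ∣ N then -1 else 0 := by
  have h := FiniteField.sum_pow_units K N
  calc ∑ u : Kˣ, σ₀ (u : K) ^ N = σ₀ (∑ u : Kˣ, ((u : K) ^ N)) := by
        rw [map_sum]; simp [map_pow]
    _ = _ := by rw [h]; split <;> simp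
lemma unit_inv_pow (σ₀ : K →+* 𝔽) (j : ℕ) (hj : p ^ j ≤ q - 1) (u : Kˣ) :
    (σ₀ (u : K) ^ p ^ j)⁻¹ = σ₀ (u : K) ^ (q - 1 - p ^ j) := by
  symm
  apply eq_inv_of_mul_eq_one_left
  rw [← pow_add, Nat.sub_add_cancel hj, ← map_pow,
    FiniteField.pow_card_sub_one_eq_one _ u.ne_zero, map_one]
lemma Yelt_eq_S (σ₀ : K →+* 𝔽) (j : ℕ) (hjq : p ^ j < q - 1) :
    Yelt p σ₀ j = S σ₀ (q - 1 - p ^ j) := by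
  rw [Yelt, S]
  rw [show (∑ a : Kˣ, AddMonoidAlgebra.single ((a : K) : K) ((σ₀ (a : K) ^ p ^ j)⁻¹))
      = ∑ a : Kˣ, AddMonoidAlgebra.single ((a : K)) (σ₀ (a : K) ^ (q - 1 - p ^ j)) from
    Finset.sum_congr rfl fun u _ => by rw [unit_inv_pow σ₀ j hjq.le]]
  exact sum_units_eq (fun a => AddMonoidAlgebra.single a (σ₀ a ^ (q - 1 - p ^ j)))
    (by rw [map_zero, zero_pow (by omega : q - 1 - p ^ j ≠ 0),
      AddMonoidAlgebra.single_zero])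

lemma single_finset_sum_AMA {ι : Type*} (s : Finset ι) (g : ι → 𝔽) (c : K) :
    AddMonoidAlgebra.single c (∑ b ∈ s, g b) = ∑ b ∈ s, AddMonoidAlgebra.single c (g b) :=
  map_sum (AddMonoidAlgebra.singleAddHom c) g s

lemma sum_all_pow (σ₀ : K →+* 𝔽) (N : ℕ) (hN : N ≠ 0) :
    ∑ a : K, σ₀ a ^ N = if (q - 1) ∣ N then -1 else 0 := by
  rw [← sum_units_eq (fun a => σ₀ a ^ N) (by rw [map_zero, zero_pow hN]),
    sum_units_pow]

lemma Y_mul_S (hp2 : 2 < p) (σ₀ : K →+* 𝔽) (j m : ℕ)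
    (hjm : p ^ j ≤ m) (hmq : m ≤ q - 1) (hjq : p ^ j < q - 1) :
    Yelt p σ₀ j * S σ₀ m = (m.choose (p ^ j) : 𝔽) • S σ₀ (m - p ^ j) := by
  have hq1 : 1 < q := Fintype.one_lt_card
  have hoddp : Odd (p ^ j) := (hp.out.odd_of_ne_two (by omega)).pow
  rw [Yelt_eq_S σ₀ j hjq]
  set e := q - 1 - p ^ j with he
  have he1 : 1 ≤ e := by omega
  rw [S, S, Finset.sum_mul_sum]
  simp only [AddMonoidAlgebra.single_mul_single]
  have hre : ∀ a : K, (∑ b : K, AddMonoidAlgebra.single (a + b) (σ₀ a ^ e * σ₀ b ^ m))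
      = ∑ c : K, AddMonoidAlgebra.single c (σ₀ a ^ e * σ₀ (c - a) ^ m) := by
    intro a
    apply Fintype.sum_equiv (Equiv.addLeft a)
    intro b
    simp
  rw [Finset.sum_congr rfl fun a _ => hre a, Finset.sum_comm]
  rw [S, Finset.smul_sum]
  refine Finset.sum_congr rfl fun c _ => ?_
  rw [show (∑ a : K, AddMonoidAlgebra.single c (σ₀ a ^ e * σ₀ (c - a) ^ m))
      = AddMonoidAlgebra.single c (∑ a : K, σ₀ a ^ e * σ₀ (c - a) ^ m) from
    (single_finset_sum_AMA _ _ c).symm]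
  have hsm : (m.choose (p ^ j) : 𝔽) • AddMonoidAlgebra.single c (σ₀ c ^ (m - p ^ j))
      = AddMonoidAlgebra.single c ((m.choose (p ^ j) : 𝔽) * σ₀ c ^ (m - p ^ j)) := by
    rw [AddMonoidAlgebra.smul_single']
  rw [hsm]
  show AddMonoidAlgebra.single c _ = AddMonoidAlgebra.single c _
  congr 1
  -- scalar identity
  have expand : ∀ a : K, σ₀ a ^ e * σ₀ (c - a) ^ m
      = ∑ k ∈ range (m + 1), σ₀ a ^ (e + (m - k))
          * ((-1) ^ (k + m) * σ₀ c ^ k * (m.choose k : 𝔽)) := by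
    intro a
    rw [map_sub, sub_pow, Finset.mul_sum]
    refine Finset.sum_congr rfl fun k _ => ?_
    rw [pow_add]; ring
  rw [Finset.sum_congr rfl fun a _ => expand a, Finset.sum_comm]
  have hterm : ∀ k ∈ range (m + 1), k ≠ m - p ^ j →
      (∑ a : K, σ₀ a ^ (e + (m - k)) * ((-1) ^ (k + m) * σ₀ c ^ k * (m.choose k : 𝔽))) = 0 := by
    intro k hk hne
    rw [← Finset.sum_mul, sum_all_pow σ₀ _ (by omega), if_neg, zero_mul]
    intro hdvd
    rw [Finset.mem_range] at hk
    have hpos : 0 < e + (m - k) := by omega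
    have hle : q - 1 ≤ e + (m - k) := Nat.le_of_dvd hpos hdvd
    have hdvd2 : (q - 1) ∣ (e + (m - k) - (q - 1)) := Nat.dvd_sub hdvd dvd_rfl
    have hpj : 0 < p ^ j := pow_pos (by omega) j
    have h0 : e + (m - k) - (q - 1) = 0 := Nat.eq_zero_of_dvd_of_lt hdvd2 (by omega)
    omega
  rw [Finset.sum_eq_single_of_mem (m - p ^ j) (Finset.mem_range.2 (by omega)) hterm]
  rw [← Finset.sum_mul, sum_all_pow σ₀ _ (by omega), if_pos (by
    refine ⟨1, ?_⟩
    omega)]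
  have hodd2 : Odd ((m - p ^ j) + m) := by
    rw [Nat.odd_iff] at hoddp ⊢
    omega
  rw [hodd2.neg_one_pow, Nat.choose_symm hjm]
  ring

lemma geom_sum_digits (hp1 : 0 < p) : ∀ f : ℕ, ∑ i ∈ Finset.range f, (p - 1) * p ^ i = p ^ f - 1
  | 0 => by simp
  | (f + 1) => by
    rw [Finset.sum_range_succ, geom_sum_digits hp1 f, pow_succ]
    have h1 : 1 ≤ p ^ f := Nat.one_le_pow _ _ hp1
    have h2 : (p - 1) * p ^ f = p * p ^ f - 1 * p ^ f := by rw [← Nat.sub_mul]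
    have h3 : p ^ f ≤ p * p ^ f := Nat.le_mul_of_pos_left _ hp1
    have h4 : p ^ f * p = p * p ^ f := mul_comm _ _
    omega

lemma choose_digits (g : ℕ → ℕ) (hg : ∀ i, g i < p) :
    ∀ f j, j < f → Nat.choose (∑ i ∈ Finset.range f, g i * p ^ i) (p ^ j) ≡ g j [MOD p]
  | 0, j, hj => absurd hj (by omega)
  | (f + 1), j, hj => by
    have hp1 : 0 < p := hp.out.pos
    set m' := ∑ i ∈ Finset.range f, g (i + 1) * p ^ i with hm'
    have hm : ∑ i ∈ Finset.range (f + 1), g i * p ^ i = g 0 + p * m' := by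
      rw [Finset.sum_range_succ']
      simp only [pow_zero, mul_one]
      rw [add_comm, hm', Finset.mul_sum]
      congr 1
      refine Finset.sum_congr rfl fun i _ => ?_
      ring
    have hmod : (g 0 + p * m') % p = g 0 := by
      rw [Nat.add_mul_mod_self_left, Nat.mod_eq_of_lt (hg 0)]
    have hdiv : (g 0 + p * m') / p = m' := by
      rw [Nat.add_mul_div_left _ _ hp1, Nat.div_eq_of_lt (hg 0), zero_add]
    rw [hm]
    cases j with
    | zero =>
      rw [pow_zero, Nat.choose_one_right]
      show _ % p = _ % p
      rw [Nat.add_mul_mod_self_left]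
    | succ j =>
      have h1 : (p ^ (j + 1)) % p = 0 := by rw [pow_succ, Nat.mul_mod_left]
      have h2 : (p ^ (j + 1)) / p = p ^ j := by rw [pow_succ, Nat.mul_div_cancel _ hp1]
      calc Nat.choose (g 0 + p * m') (p ^ (j + 1))
          ≡ Nat.choose ((g 0 + p * m') % p) ((p ^ (j + 1)) % p)
            * Nat.choose ((g 0 + p * m') / p) ((p ^ (j + 1)) / p) [MOD p] :=
            Choose.choose_modEq_choose_mod_mul_choose_div_nat
        _ = Nat.choose m' (p ^ j) := by
            rw [hmod, h1, h2, hdiv, Nat.choose_zero_right, one_mul]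
        _ ≡ g (j + 1) [MOD p] :=
            choose_digits (fun i => g (i + 1)) (fun i => hg _) f j (by omega)

lemma pow_lt_qsub1 (hp2 : 2 < p) {j f : ℕ} (hjf : j < f) : p ^ j < p ^ f - 1 := by
  have h1 : p ^ j ≤ p ^ (f - 1) := Nat.pow_le_pow_right (by omega) (by omega)
  have h2 : p ^ f = p ^ (f - 1) * p := by rw [← pow_succ]; congr 1; omega
  have h3 : 1 ≤ p ^ (f - 1) := Nat.one_le_pow _ _ (by omega)
  have h4 : p ^ (f - 1) * 3 ≤ p ^ (f - 1) * p := Nat.mul_le_mul_left _ (by omega)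
  omega

lemma digits_le {f : ℕ} (hK : q = p ^ f) (n : Fin f → ℕ) (hn : ∀ i, n i ≤ p - 1) :
    ∑ i, n i * p ^ (i : ℕ) ≤ q - 1 := by
  have h1 : ∑ i : Fin f, n i * p ^ (i : ℕ) ≤ ∑ i : Fin f, (p - 1) * p ^ (i : ℕ) :=
    Finset.sum_le_sum fun i _ => Nat.mul_le_mul_right _ (hn i)
  rw [Fin.sum_univ_eq_sum_range (fun i => (p - 1) * p ^ i) f, geom_sum_digits hp.out.pos f] at h1
  omega

lemma Y_mul_T [CharP 𝔽 p] (hp2 : 2 < p) (σ₀ : K →+* 𝔽) {f : ℕ} (hK : q = p ^ f)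
    (n : Fin f → ℕ) (hn : ∀ i, n i ≤ p - 1) (j : Fin f) (hj : 1 ≤ n j) :
    Yelt p σ₀ (j : ℕ) * S σ₀ (∑ i, n i * p ^ (i : ℕ))
      = ((n j : ℕ) : 𝔽) • S σ₀ (∑ i, (Function.update n j (n j - 1)) i * p ^ (i : ℕ)) := by
  have hp1 : 0 < p := by omega
  set m := ∑ i, n i * p ^ (i : ℕ) with hm
  have hjm : p ^ (j : ℕ) ≤ m := by
    calc p ^ (j : ℕ) ≤ n j * p ^ (j : ℕ) := Nat.le_mul_of_pos_left _ hj
      _ ≤ m := Finset.single_le_sum (f := fun i : Fin f => n i * p ^ (i : ℕ))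
          (fun i _ => Nat.zero_le _) (Finset.mem_univ j)
  have hmq : m ≤ q - 1 := digits_le hK n hn
  have hjq : p ^ (j : ℕ) < q - 1 := by rw [hK]; exact pow_lt_qsub1 hp2 j.isLt
  rw [Y_mul_S hp2 σ₀ _ _ hjm hmq hjq]
  have hsub : m - p ^ (j : ℕ) = ∑ i, (Function.update n j (n j - 1)) i * p ^ (i : ℕ) := by
    have e1 : m = n j * p ^ (j : ℕ) + ∑ i ∈ Finset.univ.erase j, n i * p ^ (i : ℕ) :=
      (Finset.add_sum_erase _ _ (Finset.mem_univ j)).symm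
    have e2 : ∑ i, (Function.update n j (n j - 1)) i * p ^ (i : ℕ)
        = (n j - 1) * p ^ (j : ℕ) + ∑ i ∈ Finset.univ.erase j, n i * p ^ (i : ℕ) := by
      rw [← Finset.add_sum_erase _ _ (Finset.mem_univ j), Function.update_self]
      congr 1
      refine Finset.sum_congr rfl fun i hi => ?_
      rw [Function.update_of_ne (Finset.mem_erase.1 hi).1]
    obtain ⟨t, ht⟩ := Nat.exists_eq_add_of_le hj
    have e3 : (n j - 1) * p ^ (j : ℕ) + p ^ (j : ℕ) = n j * p ^ (j : ℕ) := by
      rw [ht]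
      simp only [Nat.add_sub_cancel_left]
      ring
    omega
  rw [hsub]
  congr 1
  have hlucas : Nat.choose m (p ^ (j : ℕ)) ≡ n j [MOD p] := by
    have key := choose_digits (p := p) (fun i => if h : i < f then n ⟨i, h⟩ else 0)
      (fun i => by
        split
        · exact lt_of_le_of_lt (hn _) (by omega)
        · omega) f j j.isLt
    have hsum : ∑ i ∈ Finset.range f, (if h : i < f then n ⟨i, h⟩ else 0) * p ^ i = m := by
      rw [hm, ← Fin.sum_univ_eq_sum_range (fun i => (if h : i < f then n ⟨i, h⟩ else 0) * p ^ i) f]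
      refine Finset.sum_congr rfl fun i _ => ?_
      rw [dif_pos i.isLt]
    rw [hsum] at key
    simpa using key
  exact (CharP.natCast_eq_natCast 𝔽 p).2 hlucas


lemma S_card_sub_one (σ₀ : K →+* 𝔽) : S σ₀ (q - 1) = S σ₀ 0 - 1 := by
  have hq1 : 1 < q := Fintype.one_lt_card
  have h : ∀ a ∈ Finset.univ.erase (0 : K),
      AddMonoidAlgebra.single a (σ₀ a ^ (q - 1)) = AddMonoidAlgebra.single a (σ₀ a ^ 0) := by
    intro a ha
    rw [pow_zero, ← map_pow, FiniteField.pow_card_sub_one_eq_one a (Finset.mem_erase.1 ha).1,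
      map_one]
  rw [S, S, ← Finset.add_sum_erase _ _ (Finset.mem_univ (0 : K)),
    ← Finset.add_sum_erase _ (fun a => AddMonoidAlgebra.single a (σ₀ a ^ 0))
      (Finset.mem_univ (0 : K)),
    Finset.sum_congr rfl h, map_zero, zero_pow (by omega : q - 1 ≠ 0), pow_zero,
    AddMonoidAlgebra.single_zero, AddMonoidAlgebra.one_def]
  abel

lemma single_mul_S0 (σ₀ : K →+* 𝔽) (b : K) (v : 𝔽) :
    AddMonoidAlgebra.single b v * S σ₀ 0 = v • S σ₀ 0 := by
  rw [S, Finset.mul_sum, Finset.smul_sum]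
  have h : ∀ a : K, AddMonoidAlgebra.single b v * AddMonoidAlgebra.single a (σ₀ a ^ 0)
      = AddMonoidAlgebra.single (b + a) v := by
    intro a
    rw [pow_zero, AddMonoidAlgebra.single_mul_single, mul_one]
  rw [Finset.sum_congr rfl fun a _ => h a]
  apply Fintype.sum_equiv (Equiv.addLeft b)
  intro a
  rw [pow_zero, AddMonoidAlgebra.smul_single', mul_one]
  rfl

lemma Y_mul_S0 (hp2 : 2 < p) (σ₀ : K →+* 𝔽) {f : ℕ} (hK : q = p ^ f) (j : Fin f) :
    Yelt p σ₀ (j : ℕ) * S σ₀ 0 = 0 := by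
  have hjq : p ^ (j : ℕ) < q - 1 := by rw [hK]; exact pow_lt_qsub1 hp2 j.isLt
  rw [Yelt, Finset.sum_mul]
  have h1 : ∀ u : Kˣ, AddMonoidAlgebra.single ((u : K)) ((σ₀ (u : K) ^ p ^ (j : ℕ))⁻¹) * S σ₀ 0
      = (σ₀ (u : K) ^ (q - 1 - p ^ (j : ℕ))) • S σ₀ 0 := by
    intro u
    rw [single_mul_S0, unit_inv_pow σ₀ _ hjq.le u]
  rw [Finset.sum_congr rfl fun u _ => h1 u, ← Finset.sum_smul, sum_units_pow, if_neg, zero_smul]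
  have hpj : 0 < p ^ (j : ℕ) := pow_pos (by omega) _
  intro hdvd
  have := Nat.le_of_dvd (by omega) hdvd
  omega

lemma prod_pow_extract {M : Type*} [CommMonoid M] {f : ℕ} (Y : Fin f → M) (i : Fin f → ℕ)
    (j : Fin f) (hj : 1 ≤ i j) :
    ∏ k, Y k ^ i k = Y j * ∏ k, Y k ^ (Function.update i j (i j - 1)) k := by
  rw [← Finset.mul_prod_erase _ (fun k => Y k ^ i k) (Finset.mem_univ j),
    ← Finset.mul_prod_erase _ (fun k => Y k ^ (Function.update i j (i j - 1)) k)
      (Finset.mem_univ j)]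
  have h1 : Y j ^ i j = Y j * Y j ^ (i j - 1) := by
    conv_lhs => rw [show i j = (i j - 1) + 1 by omega]
    rw [pow_succ]
    exact mul_comm _ _
  rw [h1, Function.update_self,
    Finset.prod_congr rfl fun k hk =>
      congrArg (Y k ^ ·) (Function.update_of_ne (Finset.mem_erase.1 hk).1 _ _)]
  rw [mul_assoc]

lemma prod_Y_mul_S_card [CharP 𝔽 p] (hp2 : 2 < p) (σ₀ : K →+* 𝔽) {f : ℕ} (hK : q = p ^ f) :
    ∀ N (i : Fin f → ℕ), (∀ j, i j ≤ p - 1) → (∑ j : Fin f, i j) = N →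
    (∏ j : Fin f, Yelt p σ₀ (j : ℕ) ^ i j) * S σ₀ (q - 1)
      = ((∏ j : Fin f, (p - 1).descFactorial (i j) : ℕ) : 𝔽)
          • S σ₀ (∑ j : Fin f, (p - 1 - i j) * p ^ (j : ℕ))
  | 0, i, hi, hsum => by
    have h0 : ∀ j, i j = 0 := fun j => Finset.sum_eq_zero_iff.1 hsum j (Finset.mem_univ j)
    rw [Finset.prod_congr rfl fun j _ => by rw [h0 j, pow_zero], Finset.prod_const_one, one_mul,
      Finset.prod_congr rfl fun j (_ : j ∈ Finset.univ) => by
        rw [h0 j, Nat.descFactorial_zero],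
      Finset.prod_const_one, Nat.cast_one, one_smul]
    congr 1
    rw [Finset.sum_congr rfl fun j (_ : j ∈ Finset.univ) => by rw [h0 j, Nat.sub_zero],
      Fin.sum_univ_eq_sum_range (fun i => (p - 1) * p ^ i) f, geom_sum_digits (by omega) f, hK]
  | (N + 1), i, hi, hsum => by
    have hex : ∃ j, 1 ≤ i j := by
      by_contra h
      push_neg at h
      have : ∀ j ∈ Finset.univ, i j = 0 := fun j _ => by have := h j; omega
      rw [Finset.sum_eq_zero this] at hsum
      omega
    obtain ⟨j, hj⟩ := hex
    set i' := Function.update i j (i j - 1) with hi'def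
    have hi' : ∀ k, i' k ≤ p - 1 := by
      intro k
      rw [hi'def]
      rcases eq_or_ne k j with rfl | hne
      · rw [Function.update_self]; have := hi k; omega
      · rw [Function.update_of_ne hne]; exact hi k
    have hsum' : (∑ k, i' k) = N := by
      have e1 : (∑ k, i' k) = (i j - 1) + ∑ k ∈ Finset.univ.erase j, i k := by
        rw [hi'def, Finset.sum_update_of_mem (Finset.mem_univ j), Finset.erase_eq]
      have e2 : (∑ k, i k) = i j + ∑ k ∈ Finset.univ.erase j, i k :=
        (Finset.add_sum_erase _ _ (Finset.mem_univ j)).symm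
      omega
    rw [prod_pow_extract (fun k : Fin f => Yelt p σ₀ (k : ℕ)) i j hj, mul_assoc,
      prod_Y_mul_S_card hp2 σ₀ hK N i' hi' hsum']
    set n : Fin f → ℕ := fun k => p - 1 - i' k with hn_def
    have hn : ∀ k, n k ≤ p - 1 := fun k => by show p - 1 - i' k ≤ p - 1; omega
    have hij' : i' j = i j - 1 := by rw [hi'def, Function.update_self]
    have hnj : 1 ≤ n j := by
      show 1 ≤ p - 1 - i' j
      have h2 := hi j
      omega
    rw [mul_smul_comm, Y_mul_T hp2 σ₀ hK n hn j hnj, smul_smul]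
    congr 1
    · -- scalars
      rw [← Nat.cast_mul]
      congr 1
      have hd : (p - 1).descFactorial (i j) = n j * (p - 1).descFactorial (i' j) := by
        conv_lhs => rw [show i j = i' j + 1 by omega]
        rw [Nat.descFactorial_succ]
      have hrest : ∀ k ∈ Finset.univ.erase j,
          (p - 1).descFactorial (i' k) = (p - 1).descFactorial (i k) := fun k hk => by
        rw [hi'def, Function.update_of_ne (Finset.mem_erase.1 hk).1]
      rw [← Finset.mul_prod_erase _ (fun k => (p - 1).descFactorial (i' k)) (Finset.mem_univ j),
        ← Finset.mul_prod_erase _ (fun k => (p - 1).descFactorial (i k)) (Finset.mem_univ j),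
        Finset.prod_congr rfl hrest, hd]
      ring
    · -- exponents
      congr 1
      refine Finset.sum_congr rfl fun k _ => ?_
      congr 1
      rcases eq_or_ne k j with rfl | hne
      · rw [Function.update_self]
        have h1 : n k = p - 1 - (i k - 1) := by
          show p - 1 - i' k = _
          rw [hij']
        have h2 := hi k
        omega
      · rw [Function.update_of_ne hne]
        show p - 1 - i' k = p - 1 - i k
        rw [hi'def, Function.update_of_ne hne]

lemma prod_Y_eq [CharP 𝔽 p] (hp2 : 2 < p) (σ₀ : K →+* 𝔽) {f : ℕ} (hK : q = p ^ f)
    (i : Fin f → ℕ) (hi : ∀ j, i j ≤ p - 1) (j₀ : Fin f) (hj₀ : 1 ≤ i j₀) :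
    (∏ j : Fin f, Yelt p σ₀ (j : ℕ) ^ i j)
      = -(((∏ j : Fin f, (p - 1).descFactorial (i j) : ℕ) : 𝔽)
          • S σ₀ (∑ j : Fin f, (p - 1 - i j) * p ^ (j : ℕ))) := by
  have h1 := prod_Y_mul_S_card hp2 σ₀ hK (∑ j : Fin f, i j) i hi rfl
  rw [S_card_sub_one σ₀, mul_sub, mul_one] at h1
  have h2 : (∏ j : Fin f, Yelt p σ₀ (j : ℕ) ^ i j) * S σ₀ 0 = 0 := by
    rw [prod_pow_extract (fun k : Fin f => Yelt p σ₀ (k : ℕ)) i j₀ hj₀, mul_comm (Yelt p σ₀ _),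
      mul_assoc, Y_mul_S0 hp2 σ₀ hK j₀, mul_zero]
  rw [h2, zero_sub] at h1
  rw [← h1, neg_neg]


lemma tau_pow [CharP K p] {f : ℕ} (hK : q = p ^ f) (a : K) :
    (∑ j ∈ Finset.range f, a ^ p ^ j) ^ p = ∑ j ∈ Finset.range f, a ^ p ^ j := by
  rw [sum_pow_char]
  have h : ∀ j ∈ Finset.range f, (a ^ p ^ j) ^ p = a ^ p ^ (j + 1) := fun j _ => by
    rw [← pow_mul, ← pow_succ]
  rw [Finset.sum_congr rfl h]
  have e1 : ∑ j ∈ Finset.range (f + 1), a ^ p ^ j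
      = (∑ j ∈ Finset.range f, a ^ p ^ (j + 1)) + a ^ p ^ 0 :=
    Finset.sum_range_succ' (fun j => a ^ p ^ j) f
  have e2 : ∑ j ∈ Finset.range (f + 1), a ^ p ^ j
      = (∑ j ∈ Finset.range f, a ^ p ^ j) + a ^ p ^ f := Finset.sum_range_succ _ _
  have e3 : a ^ p ^ f = a := by rw [← hK, FiniteField.pow_card]
  have e4 : a ^ p ^ 0 = a := by rw [pow_zero, pow_one]
  have e5 := e1.symm.trans e2
  rw [e3, e4] at e5
  linear_combination e5

lemma trace_frobenius [CharP K p] [Algebra (ZMod p) K] (hp2 : 2 < p) {f : ℕ}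
    (hK : q = p ^ f) (a : K) :
    algebraMap (ZMod p) K (Algebra.trace (ZMod p) K a) = ∑ j ∈ Finset.range f, a ^ p ^ j := by
  have hfr : ∀ j : ℕ, Function.Bijective (iterateFrobenius K p j) := fun j =>
    Finite.injective_iff_bijective.1 (iterateFrobenius K p j).injective
  let Fa : ℕ → (K →ₐ[ZMod p] K) := fun j =>
    ⟨iterateFrobenius K p j, fun r => RingHom.congr_fun
      (RingHom.ext_zmod ((iterateFrobenius K p j).comp (algebraMap (ZMod p) K))
        (algebraMap (ZMod p) K)) r⟩
  let F : ℕ → (K ≃ₐ[ZMod p] K) := fun j => AlgEquiv.ofBijective (Fa j) (hfr j)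
  have hFval : ∀ (j : ℕ) (x : K), F j x = x ^ p ^ j := fun j x => rfl
  -- order of a generator
  obtain ⟨g, hg⟩ := IsCyclic.exists_generator (α := Kˣ)
  have horder : orderOf g = q - 1 := by
    rw [orderOf_eq_card_of_forall_mem_zpowers hg, Nat.card_eq_fintype_card, Fintype.card_units]
  have hinj : Function.Injective (fun j : Fin f => F (j : ℕ)) := by
    have key : ∀ i j : Fin f, i < j → F (i : ℕ) ≠ F (j : ℕ) := by
      intro i j hij hEq
      have hx : ((g : K)) ^ p ^ (i : ℕ) = ((g : K)) ^ p ^ (j : ℕ) := by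
        rw [← hFval, ← hFval, hEq]
      have hxu : g ^ p ^ (i : ℕ) = g ^ p ^ (j : ℕ) := Units.ext (by
        push_cast
        exact hx)
      have hmod : p ^ (i : ℕ) ≡ p ^ (j : ℕ) [MOD orderOf g] := pow_eq_pow_iff_modEq.1 hxu
      rw [horder] at hmod
      have hle : p ^ (i : ℕ) ≤ p ^ (j : ℕ) :=
        Nat.pow_le_pow_right (by omega) (le_of_lt hij)
      have hdvd : (q - 1) ∣ p ^ (j : ℕ) - p ^ (i : ℕ) := (Nat.modEq_iff_dvd' hle).1 hmod
      have hlt : p ^ (i : ℕ) < p ^ (j : ℕ) :=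
        Nat.pow_lt_pow_right (by omega) hij
      have hjq : p ^ (j : ℕ) < q - 1 := by rw [hK]; exact pow_lt_qsub1 hp2 j.isLt
      have := Nat.le_of_dvd (by omega) hdvd
      omega
    intro i j hij
    rcases lt_trichotomy i j with h | h | h
    · exact absurd hij (key i j h)
    · exact h
    · exact absurd hij.symm (key j i h)
  have hcard : Fintype.card (K ≃ₐ[ZMod p] K) = f := by
    rw [← Nat.card_eq_fintype_card, IsGalois.card_aut_eq_finrank]
    have hc := Module.card_eq_pow_finrank (K := ZMod p) (V := K)
    rw [ZMod.card, hK] at hc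
    exact (Nat.pow_right_injective hp.out.two_le hc.symm)
  have hbij : Function.Bijective (fun j : Fin f => F (j : ℕ)) :=
    (Fintype.bijective_iff_injective_and_card _).2 ⟨hinj, by rw [hcard, Fintype.card_fin]⟩
  rw [trace_eq_sum_automorphisms,
    ← Fintype.sum_bijective _ hbij (fun j : Fin f => a ^ p ^ (j : ℕ)) (fun σ => σ a)
      (fun j => (hFval (j : ℕ) a).symm),
    Fin.sum_univ_eq_sum_range (fun j => a ^ p ^ j) f]

lemma trace_zero_iff [CharP K p] [Algebra (ZMod p) K] (hp2 : 2 < p) {f : ℕ}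
    (hK : q = p ^ f) (a : K) :
    Algebra.trace (ZMod p) K a = 0 ↔ ∑ j ∈ Finset.range f, a ^ p ^ j = 0 := by
  rw [← trace_frobenius hp2 hK a,
    map_eq_zero_iff (algebraMap (ZMod p) K) (algebraMap (ZMod p) K).injective]

lemma wilson_cast [CharP 𝔽 p] : ((Nat.factorial (p - 1) : ℕ) : 𝔽) = -1 := by
  have h := ZMod.wilsons_lemma p
  calc ((Nat.factorial (p - 1) : ℕ) : 𝔽) = ZMod.castHom (dvd_refl p) 𝔽 ((Nat.factorial (p - 1) : ℕ) : ZMod p) := by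
        rw [map_natCast]
    _ = ZMod.castHom (dvd_refl p) 𝔽 (-1) := by rw [h]
    _ = -1 := by rw [map_neg, map_one]

lemma factorial_cast_ne_zero [CharP 𝔽 p] {k : ℕ} (hk : k < p) : ((Nat.factorial k : ℕ) : 𝔽) ≠ 0 := by
  rw [Ne, CharP.cast_eq_zero_iff 𝔽 p]
  intro hdvd
  exact absurd ((Nat.Prime.dvd_factorial hp.out).1 hdvd) (by omega)


lemma neg_one_pow_helper {f : ℕ} (hf : 1 ≤ f) : ((-1 : 𝔽) ^ (f - 1)) * (-1) ^ f = -1 := by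
  rw [← pow_add, show f - 1 + f = 2 * (f - 1) + 1 by omega, pow_succ, pow_mul, neg_one_sq,
    one_pow, one_mul]

end Aux


open Finset in
theorem statement16 (p f : ℕ) [Fact p.Prime] (hp : 2 < p) (hf : 1 < f)
    (K : Type*) [Field K] [Fintype K] [DecidableEq K] [Algebra (ZMod p) K]
    (hK : Fintype.card K = p ^ f)
    (𝔽 : Type*) [Field 𝔽] (σ₀ : K →+* 𝔽) :
    ∑ a ∈ Finset.univ.filter (fun a : K => Algebra.trace (ZMod p) K a = 0),
        AddMonoidAlgebra.single a (1 : 𝔽)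
      = ((-1 : 𝔽) ^ (f - 1)) •
          (∏ j : Fin f, Yelt p σ₀ (j : ℕ) ^ (p - 1)
            + ∑ t ∈ Finset.univ.filter
                (fun t : Fin f → Fin p => ∑ j : Fin f, (t j : ℕ) = (p - 1) * (f - 1)),
                ∏ j : Fin f, Yelt p σ₀ (j : ℕ) ^ (t j : ℕ)) := by
  haveI : CharP K p := charP_of_injective_ringHom (algebraMap (ZMod p) K).injective p
  haveI : CharP 𝔽 p := charP_of_injective_ringHom σ₀.injective p
  have hp2 : 2 < p := hp
  -- Step 1: rewrite the LHS with the indicator 1 - τ(a)^{p-1}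
  have hstep1 : ∑ a ∈ Finset.univ.filter (fun a : K => Algebra.trace (ZMod p) K a = 0),
      AddMonoidAlgebra.single a (1 : 𝔽)
      = ∑ a : K, AddMonoidAlgebra.single a
          ((1 : 𝔽) - σ₀ (∑ j ∈ Finset.range f, a ^ p ^ j) ^ (p - 1)) := by
    rw [Finset.sum_filter]
    refine Finset.sum_congr rfl fun a _ => ?_
    by_cases h : (∑ j ∈ Finset.range f, a ^ p ^ j) = 0
    · rw [if_pos ((trace_zero_iff hp2 hK a).2 h), h, map_zero,
        zero_pow (by omega : p - 1 ≠ 0), sub_zero]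
    · rw [if_neg (fun hc => h ((trace_zero_iff hp2 hK a).1 hc))]
      have hpow : (∑ j ∈ Finset.range f, a ^ p ^ j) ^ (p - 1) = 1 := by
        have hp_eq := tau_pow hK a
        set t := ∑ j ∈ Finset.range f, a ^ p ^ j with ht
        rw [show p = (p - 1) + 1 by omega, pow_succ] at hp_eq
        have h2 : t ^ (p - 1) * t = 1 * t := by rw [one_mul]; exact hp_eq
        exact mul_right_cancel₀ h h2
      rw [← map_pow, hpow, map_one, sub_self, AddMonoidAlgebra.single_zero]
  -- Step 2
  have hstep2 : (∑ a : K, AddMonoidAlgebra.single a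
          ((1 : 𝔽) - σ₀ (∑ j ∈ Finset.range f, a ^ p ^ j) ^ (p - 1)))
      = S σ₀ 0 - ∑ a : K, AddMonoidAlgebra.single a
          (σ₀ (∑ j ∈ Finset.range f, a ^ p ^ j) ^ (p - 1)) := by
    rw [S, ← Finset.sum_sub_distrib]
    refine Finset.sum_congr rfl fun a _ => ?_
    rw [pow_zero, ← AddMonoidAlgebra.single_sub]
  -- Step 3: multinomial expansion
  have hstep3 : (∑ a : K, AddMonoidAlgebra.single a
          (σ₀ (∑ j ∈ Finset.range f, a ^ p ^ j) ^ (p - 1)))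
      = ∑ k ∈ Finset.piAntidiag (Finset.univ : Finset (Fin f)) (p - 1),
          ((Nat.multinomial Finset.univ k : ℕ) : 𝔽)
            • S σ₀ (∑ j : Fin f, k j * p ^ (j : ℕ)) := by
    have hcoef : ∀ a : K, σ₀ (∑ j ∈ Finset.range f, a ^ p ^ j) ^ (p - 1)
        = ∑ k ∈ Finset.piAntidiag (Finset.univ : Finset (Fin f)) (p - 1),
            ((Nat.multinomial Finset.univ k : ℕ) : 𝔽)
              * σ₀ a ^ (∑ j : Fin f, k j * p ^ (j : ℕ)) := by
      intro a
      rw [map_sum]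
      rw [show (∑ j ∈ Finset.range f, σ₀ (a ^ p ^ j)) = ∑ j : Fin f, σ₀ a ^ p ^ (j : ℕ) by
        rw [← Fin.sum_univ_eq_sum_range (fun j => σ₀ (a ^ p ^ j)) f]
        exact Finset.sum_congr rfl fun j _ => by rw [map_pow]]
      rw [Finset.sum_pow_eq_sum_piAntidiag]
      refine Finset.sum_congr rfl fun k hk => ?_
      congr 1
      rw [← Finset.prod_pow_eq_pow_sum]
      refine Finset.prod_congr rfl fun j _ => ?_
      rw [mul_comm (k j) (p ^ (j : ℕ)), pow_mul]
    rw [Finset.sum_congr rfl fun a _ => by rw [hcoef a]]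
    rw [Finset.sum_congr rfl fun a _ =>
      single_finset_sum_AMA
        (Finset.piAntidiag (Finset.univ : Finset (Fin f)) (p - 1))
        (fun k => ((Nat.multinomial Finset.univ k : ℕ) : 𝔽)
          * σ₀ a ^ (∑ j : Fin f, k j * p ^ (j : ℕ))) a]
    rw [Finset.sum_comm]
    refine Finset.sum_congr rfl fun k _ => ?_
    rw [S, Finset.smul_sum]
    refine Finset.sum_congr rfl fun a _ => ?_
    rw [AddMonoidAlgebra.smul_single']
  -- S 0 in terms of the product of Y's
  have hS0 : S σ₀ 0 = ((-1 : 𝔽) ^ (f - 1)) • ∏ j : Fin f, Yelt p σ₀ (j : ℕ) ^ (p - 1) := by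
    have h := prod_Y_eq hp2 σ₀ hK (fun _ => p - 1) (fun _ => le_refl _)
      ⟨0, by omega⟩ (show 1 ≤ p - 1 by omega)
    have h1 : (∑ j : Fin f, (p - 1 - ((fun _ : Fin f => p - 1) j)) * p ^ (j : ℕ)) = 0 := by
      simp
    have h2 : (∏ j : Fin f, (p - 1).descFactorial ((fun _ : Fin f => p - 1) j))
        = (Nat.factorial (p - 1)) ^ f := by
      rw [Finset.prod_const, Nat.descFactorial_self, Finset.card_univ, Fintype.card_fin]
    rw [h1, h2] at h
    rw [h, Nat.cast_pow, wilson_cast, smul_neg, smul_smul, neg_one_pow_helper (by omega),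
      neg_smul, one_smul, neg_neg]
  -- per-k evaluation
  have hperk : ∀ k ∈ Finset.piAntidiag (Finset.univ : Finset (Fin f)) (p - 1),
      ((Nat.multinomial Finset.univ k : ℕ) : 𝔽) • S σ₀ (∑ j : Fin f, k j * p ^ (j : ℕ))
      = -(((-1 : 𝔽) ^ (f - 1)) • ∏ j : Fin f, Yelt p σ₀ (j : ℕ) ^ (p - 1 - k j)) := by
    intro k hk
    obtain ⟨hk1, -⟩ := Finset.mem_piAntidiag.1 hk
    have hkle : ∀ j : Fin f, k j ≤ p - 1 := fun j => hk1 ▸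
      Finset.single_le_sum (f := fun i : Fin f => k i)
        (fun i _ => Nat.zero_le _) (Finset.mem_univ j)
    have hex : ∃ j₀ : Fin f, 1 ≤ p - 1 - k j₀ := by
      by_contra hcon
      push_neg at hcon
      have hge : ∀ j : Fin f, p - 1 ≤ k j := fun j => by have := hcon j; omega
      have hbig : f * (p - 1) ≤ ∑ j : Fin f, k j := by
        have e : (∑ _j : Fin f, (p - 1)) = f * (p - 1) := by
          rw [Finset.sum_const, Finset.card_univ, Fintype.card_fin, smul_eq_mul]
        rw [← e]
        exact Finset.sum_le_sum fun j _ => hge j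
      rw [hk1] at hbig
      have h2f : 2 * (p - 1) ≤ f * (p - 1) := Nat.mul_le_mul_right _ (by omega)
      omega
    obtain ⟨j₀, hj₀⟩ := hex
    have hprod := prod_Y_eq hp2 σ₀ hK (fun j => p - 1 - k j)
      (fun j => Nat.sub_le _ _) j₀ hj₀
    have hexp : (∑ j : Fin f, (p - 1 - ((fun j : Fin f => p - 1 - k j) j)) * p ^ (j : ℕ))
        = ∑ j : Fin f, k j * p ^ (j : ℕ) :=
      Finset.sum_congr rfl fun j _ => by
        have := hkle j
        congr 1
        show p - 1 - (p - 1 - k j) = k j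
        omega
    rw [hexp] at hprod
    -- the scalar identity
    have hF : ((∏ j : Fin f, Nat.factorial (k j) : ℕ) : 𝔽) ≠ 0 := by
      rw [Nat.cast_prod]
      apply Finset.prod_ne_zero_iff.2
      intro j _
      exact factorial_cast_ne_zero (show k j < p by have := hkle j; omega)
    have h1 : ((Nat.multinomial Finset.univ k : ℕ) : 𝔽)
        * ((∏ j : Fin f, Nat.factorial (k j) : ℕ) : 𝔽) = -1 := by
      rw [← Nat.cast_mul, mul_comm (Nat.multinomial Finset.univ k), Nat.multinomial_spec,
        hk1, wilson_cast]
    have h2 : ((∏ j : Fin f, (p - 1).descFactorial ((fun j : Fin f => p - 1 - k j) j) : ℕ) : 𝔽)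
        * ((∏ j : Fin f, Nat.factorial (k j) : ℕ) : 𝔽) = (-1 : 𝔽) ^ f := by
      rw [← Nat.cast_mul, ← Finset.prod_mul_distrib]
      have hfac : ∀ j : Fin f, (p - 1).descFactorial (p - 1 - k j) * Nat.factorial (k j)
          = Nat.factorial (p - 1) := by
        intro j
        have := Nat.factorial_mul_descFactorial
          (show p - 1 - k j ≤ p - 1 from Nat.sub_le _ _)
        rw [show p - 1 - (p - 1 - k j) = k j by have := hkle j; omega] at this
        rw [mul_comm]
        exact this
      rw [Finset.prod_congr rfl fun j _ => hfac j, Finset.prod_const, Finset.card_univ,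
        Fintype.card_fin, Nat.cast_pow, wilson_cast]
    have hscalar : ((Nat.multinomial Finset.univ k : ℕ) : 𝔽)
        = ((-1 : 𝔽) ^ (f - 1))
          * ((∏ j : Fin f, (p - 1).descFactorial ((fun j : Fin f => p - 1 - k j) j) : ℕ) : 𝔽) := by
      apply mul_right_cancel₀ hF
      rw [h1, mul_assoc, h2, neg_one_pow_helper (by omega)]
    rw [hscalar, mul_smul, hprod, smul_neg, neg_neg]
  -- assemble
  rw [hstep1, hstep2, hstep3, Finset.sum_congr rfl hperk, hS0, smul_add, Finset.smul_sum,
    Finset.sum_neg_distrib, sub_neg_eq_add]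
  congr 1
  refine Finset.sum_nbij'
    (i := fun (k : Fin f → ℕ) (j : Fin f) => (⟨p - 1 - k j, by omega⟩ : Fin p))
    (j := fun (t : Fin f → Fin p) (j : Fin f) => p - 1 - (t j : ℕ))
    ?_ ?_ ?_ ?_ ?_
  · intro k hk
    obtain ⟨hk1, -⟩ := Finset.mem_piAntidiag.1 hk
    have hkle : ∀ j : Fin f, k j ≤ p - 1 := fun j => hk1 ▸
      Finset.single_le_sum (f := fun i : Fin f => k i)
        (fun i _ => Nat.zero_le _) (Finset.mem_univ j)
    rw [Finset.mem_filter]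
    refine ⟨Finset.mem_univ _, ?_⟩
    have hsplit : (∑ j : Fin f, (p - 1 - k j)) + ∑ j : Fin f, k j
        = ∑ _j : Fin f, (p - 1) := by
      rw [← Finset.sum_add_distrib]
      exact Finset.sum_congr rfl fun j _ => by have := hkle j; omega
    rw [Finset.sum_const, Finset.card_univ, Fintype.card_fin, smul_eq_mul, hk1] at hsplit
    have hmul : (p - 1) * (f - 1) = (f - 1) * (p - 1) := mul_comm _ _
    have hmul2 : (f - 1) * (p - 1) = f * (p - 1) - 1 * (p - 1) := Nat.sub_mul f 1 (p - 1)
    show (∑ j : Fin f, (p - 1 - k j)) = (p - 1) * (f - 1)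
    omega
  · intro t ht
    obtain ⟨-, ht1⟩ := Finset.mem_filter.1 ht
    rw [Finset.mem_piAntidiag]
    refine ⟨?_, fun i _ => Finset.mem_univ i⟩
    have htle : ∀ j : Fin f, (t j : ℕ) ≤ p - 1 := fun j => by have := (t j).isLt; omega
    have hsplit : (∑ j : Fin f, (p - 1 - (t j : ℕ))) + ∑ j : Fin f, (t j : ℕ)
        = ∑ _j : Fin f, (p - 1) := by
      rw [← Finset.sum_add_distrib]
      exact Finset.sum_congr rfl fun j _ => by have := htle j; omega
    rw [Finset.sum_const, Finset.card_univ, Fintype.card_fin, smul_eq_mul, ht1] at hsplit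
    have hmul : (p - 1) * (f - 1) = (f - 1) * (p - 1) := mul_comm _ _
    have hmul2 : (f - 1) * (p - 1) = f * (p - 1) - 1 * (p - 1) := Nat.sub_mul f 1 (p - 1)
    have hfp : (p - 1) ≤ f * (p - 1) := Nat.le_mul_of_pos_left _ (by omega)
    show (∑ j : Fin f, (p - 1 - (t j : ℕ))) = p - 1
    omega
  · intro k hk
    obtain ⟨hk1, -⟩ := Finset.mem_piAntidiag.1 hk
    have hkle : ∀ j : Fin f, k j ≤ p - 1 := fun j => hk1 ▸
      Finset.single_le_sum (f := fun i : Fin f => k i)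
        (fun i _ => Nat.zero_le _) (Finset.mem_univ j)
    funext j
    show p - 1 - (p - 1 - k j) = k j
    have := hkle j
    omega
  · intro t ht
    funext j
    have htle : (t j : ℕ) ≤ p - 1 := by have := (t j).isLt; omega
    ext
    show p - 1 - (p - 1 - (t j : ℕ)) = (t j : ℕ)
    omega
  · intro k hk
    rfl

end BHHMS
end

section
/- For each 0 ≤ j ≤ f−1 choose t_j ∈ {y_j, z_j, y_j z_j} and let u_j be the complementary element (u_j := z_j if t_j = y_j; u_j := y_j if t_j = z_j; u_j := 1 if t_j = y_j z_j), so that t_j u_j = y_j z_j. Let 𝔞 := (t_0,…,t_{f−1}) ⊆ R, an ideal containing all y_j z_j, and set t' := ∏_{j=0}^{f−1} u_j. Then: (a) the annihilator R̄[𝔞] of 𝔞 in R̄ equals the principal ideal t'·R̄, and multiplication by t' induces an isomorphism of R̄-modules R̄/𝔞R̄ ≅ t'·R̄; (b) consequently there is an isomorphism of R-modules Hom_{R̄}(R/𝔞, R̄) ≅ R/𝔞. (Paper: the module-theoretic content (eq:isom-barR) of Proposition 'prop:Ext-R/I' in §3.3.1, computing E^{2f} of the cyclic modules R/𝔞(λ).)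 -/
/-!
Setup (Proposition `prop:Ext-R/I`, its module-theoretic content (eq:isom-barR), §3.3.1 of
the paper): `R = 𝔽[y_0,…,y_{f−1},z_0,…,z_{f−1}]` is a polynomial ring in `2f` variables
(indexed by `Fin f ⊕ Fin f`) and `R̄ = R/(y_j z_j : 0 ≤ j ≤ f−1)`.  For the choice
`t_j ∈ {y_j, z_j, y_j z_j}` with complementary element `u_j` (so that `t_j u_j = y_j z_j`),
`𝔞 = (t_0,…,t_{f−1})` and `t' = ∏_j u_j`.  The `R̄`-module `R/𝔞` is `R̄/𝔞R̄`.
-/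

set_option synthInstance.maxHeartbeats 400000
set_option maxHeartbeats 1000000

namespace BHHMS

/-- `R = 𝔽[y_0,…,y_{f−1},z_0,…,z_{f−1}]`. -/
abbrev PolyR (𝔽 : Type*) [Field 𝔽] (f : ℕ) := MvPolynomial (Fin f ⊕ Fin f) 𝔽

/-- The variable `y j`. -/
noncomputable def yv (𝔽 : Type*) [Field 𝔽] (f : ℕ) (j : Fin f) : PolyR 𝔽 f :=
  MvPolynomial.X (Sum.inl j)

/-- The variable `z j`. -/
noncomputable def zv (𝔽 : Type*) [Field 𝔽] (f : ℕ) (j : Fin f) : PolyR 𝔽 f :=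
  MvPolynomial.X (Sum.inr j)

/-- The ideal `(y_j z_j : 0 ≤ j ≤ f−1)` of `R`. -/
noncomputable def Irel (𝔽 : Type*) [Field 𝔽] (f : ℕ) : Ideal (PolyR 𝔽 f) :=
  Ideal.span (Set.range fun j : Fin f => yv 𝔽 f j * zv 𝔽 f j)

/-- `R̄ = R/(y_j z_j : 0 ≤ j ≤ f−1)`. -/
abbrev RBar (𝔽 : Type*) [Field 𝔽] (f : ℕ) := PolyR 𝔽 f ⧸ Irel 𝔽 f

open MvPolynomial

/-- exponent of `y_j z_j` -/
noncomputable def Ee (f : ℕ) (j : Fin f) : (Fin f ⊕ Fin f) →₀ ℕ :=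
  Finsupp.single (Sum.inl j) 1 + Finsupp.single (Sum.inr j) 1

/-- the combinatorial shape of the exponents of `t_j` and `u_j` -/
def IsYZ {f : ℕ} (s u' : Fin f → ((Fin f ⊕ Fin f) →₀ ℕ)) : Prop :=
  ∀ j, (s j = Finsupp.single (Sum.inl j) 1 ∧ u' j = Finsupp.single (Sum.inr j) 1) ∨
       (s j = Finsupp.single (Sum.inr j) 1 ∧ u' j = Finsupp.single (Sum.inl j) 1) ∨
       (s j = Ee f j ∧ u' j = 0)

lemma Ee_le {f : ℕ} (j : Fin f) (m : (Fin f ⊕ Fin f) →₀ ℕ) :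
    Ee f j ≤ m ↔ 1 ≤ m (Sum.inl j) ∧ 1 ≤ m (Sum.inr j) := by
  constructor
  · intro hm
    refine ⟨le_trans ?_ (hm (Sum.inl j)), le_trans ?_ (hm (Sum.inr j))⟩ <;>
      simp [Ee, Finsupp.single_apply]
  · rintro ⟨h1, h2⟩
    rw [Finsupp.le_def]
    rintro (i | i) <;> by_cases hji : j = i
    · subst hji; simpa [Ee, Finsupp.single_apply] using h1
    · simp [Ee, Finsupp.single_apply, hji]
    · subst hji; simpa [Ee, Finsupp.single_apply] using h2
    · simp [Ee, Finsupp.single_apply, hji]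

section Comb

variable {f : ℕ} {s u' : Fin f → ((Fin f ⊕ Fin f) →₀ ℕ)}

lemma off_s (h : IsYZ s u') {j k : Fin f} (hjk : j ≠ k) :
    s j (Sum.inl k) = 0 ∧ s j (Sum.inr k) = 0 := by
  rcases h j with ⟨h1, _⟩ | ⟨h1, _⟩ | ⟨h1, _⟩ <;>
    simp [h1, Ee, Finsupp.single_apply, hjk]

lemma off_u (h : IsYZ s u') {j k : Fin f} (hjk : j ≠ k) :
    u' j (Sum.inl k) = 0 ∧ u' j (Sum.inr k) = 0 := by
  rcases h j with ⟨_, h2⟩ | ⟨_, h2⟩ | ⟨_, h2⟩ <;>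
    simp [h2, Ee, Finsupp.single_apply, hjk]

lemma U_inl (h : IsYZ s u') (k : Fin f) :
    (∑ j, u' j) (Sum.inl k) = u' k (Sum.inl k) := by
  rw [Finsupp.finset_sum_apply]
  exact Finset.sum_eq_single_of_mem k (Finset.mem_univ k) fun j _ hjk => (off_u h hjk).1

lemma U_inr (h : IsYZ s u') (k : Fin f) :
    (∑ j, u' j) (Sum.inr k) = u' k (Sum.inr k) := by
  rw [Finsupp.finset_sum_apply]
  exact Finset.sum_eq_single_of_mem k (Finset.mem_univ k) fun j _ hjk => (off_u h hjk).2

lemma ann_exp (h : IsYZ s u') (m : (Fin f ⊕ Fin f) →₀ ℕ) :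
    (∀ j, ∃ k, Ee f k ≤ s j + m) ↔ ((∑ j, u' j) ≤ m ∨ ∃ k, Ee f k ≤ m) := by
  constructor
  · intro hall
    by_cases hd : ∃ k, Ee f k ≤ m
    · exact Or.inr hd
    push_neg at hd
    left
    have hu : ∀ j, u' j (Sum.inl j) ≤ m (Sum.inl j) ∧ u' j (Sum.inr j) ≤ m (Sum.inr j) := by
      intro j
      obtain ⟨k, hk⟩ := hall j
      rw [Ee_le] at hk
      simp only [Finsupp.add_apply] at hk
      have hkj : j = k := by
        by_contra hkj
        exact hd k (by
          rw [Ee_le]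
          rw [(off_s h hkj).1, (off_s h hkj).2] at hk
          simpa using hk)
      subst hkj
      rcases h j with ⟨h1, h2⟩ | ⟨h1, h2⟩ | ⟨h1, h2⟩
      · have hm2 : 1 ≤ m (Sum.inr j) := by
          have := hk.2
          rw [h1] at this
          simpa [Finsupp.single_apply] using this
        constructor
        · rw [h2]; simp [Finsupp.single_apply]
        · rw [h2]; simpa [Finsupp.single_apply] using hm2
      · have hm1 : 1 ≤ m (Sum.inl j) := by
          have := hk.1
          rw [h1] at this
          simpa [Finsupp.single_apply] using this
        constructor
        · rw [h2]; simpa [Finsupp.single_apply] using hm1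
        · rw [h2]; simp [Finsupp.single_apply]
      · simp [h2]
    rw [Finsupp.le_def]
    rintro (i | i)
    · rw [U_inl h]; exact (hu i).1
    · rw [U_inr h]; exact (hu i).2
  · rintro (hU | ⟨k, hk⟩) j
    · refine ⟨j, ?_⟩
      rw [Ee_le]
      simp only [Finsupp.add_apply]
      constructor
      · rcases h j with ⟨h1, h2⟩ | ⟨h1, h2⟩ | ⟨h1, h2⟩
        · simp [h1, Finsupp.single_apply]
        · have h3 : (1 : ℕ) ≤ m (Sum.inl j) := by
            have := hU (Sum.inl j)
            rw [U_inl h, h2] at this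
            simpa [Finsupp.single_apply] using this
          omega
        · simp [h1, Ee, Finsupp.single_apply]
      · rcases h j with ⟨h1, h2⟩ | ⟨h1, h2⟩ | ⟨h1, h2⟩
        · have h3 : (1 : ℕ) ≤ m (Sum.inr j) := by
            have := hU (Sum.inr j)
            rw [U_inr h, h2] at this
            simpa [Finsupp.single_apply] using this
          omega
        · simp [h1, Finsupp.single_apply]
        · simp [h1, Ee, Finsupp.single_apply]
    · exact ⟨k, hk.trans (le_add_self)⟩

lemma ker_exp (h : IsYZ s u') (m : (Fin f ⊕ Fin f) →₀ ℕ) :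
    (∃ k, Ee f k ≤ (∑ j, u' j) + m) ↔ ∃ k, s k ≤ m := by
  constructor
  · rintro ⟨k, hk⟩
    rw [Ee_le] at hk
    simp only [Finsupp.add_apply, U_inl h, U_inr h] at hk
    refine ⟨k, ?_⟩
    rcases h k with ⟨h1, h2⟩ | ⟨h1, h2⟩ | ⟨h1, h2⟩
    · have := hk.1
      rw [h2] at this
      simp only [Finsupp.single_apply] at this
      simp only [show (Sum.inr k : Fin f ⊕ Fin f) = Sum.inl k ↔ False by simp, if_false] at this
      rw [h1, Finsupp.single_le_iff]
      simpa using this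
    · have := hk.2
      rw [h2] at this
      simp only [Finsupp.single_apply] at this
      simp only [show (Sum.inl k : Fin f ⊕ Fin f) = Sum.inr k ↔ False by simp, if_false] at this
      rw [h1, Finsupp.single_le_iff]
      simpa using this
    · rw [h2] at hk
      simp only [Finsupp.coe_zero, Pi.zero_apply, zero_add] at hk
      rw [h1, Ee_le]
      exact hk
  · rintro ⟨k, hk⟩
    refine ⟨k, ?_⟩
    have hEk : Ee f k = u' k + s k := by
      rcases h k with ⟨h1, h2⟩ | ⟨h1, h2⟩ | ⟨h1, h2⟩ <;>
        simp [Ee, h1, h2, add_comm]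
    rw [hEk]
    refine add_le_add ?_ hk
    exact Finset.single_le_sum (f := u') (fun i _ => by
      rw [Finsupp.le_def]; intro i'; exact Nat.zero_le _) (Finset.mem_univ k)

end Comb

section Poly

variable {𝔽 : Type*} [Field 𝔽] {f : ℕ}

lemma monomial_mul_mem_span (a : (Fin f ⊕ Fin f) →₀ ℕ) (x : PolyR 𝔽 f)
    (S : Set ((Fin f ⊕ Fin f) →₀ ℕ)) :
    monomial a (1 : 𝔽) * x ∈ Ideal.span ((fun e => monomial e (1 : 𝔽)) '' S) ↔
      ∀ m ∈ x.support, ∃ e ∈ S, e ≤ a + m := by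
  rw [mem_ideal_span_monomial_image]
  constructor
  · intro hmem m hm
    apply hmem
    rw [mem_support_iff, coeff_monomial_mul, one_mul]
    exact mem_support_iff.mp hm
  · intro hall xi hxi
    rw [mem_support_iff, coeff_monomial_mul'] at hxi
    by_cases hax : a ≤ xi
    · rw [if_pos hax, one_mul] at hxi
      obtain ⟨e, he, hle⟩ := hall (xi - a) (mem_support_iff.mpr hxi)
      refine ⟨e, he, hle.trans (le_of_eq ?_)⟩
      exact add_tsub_cancel_of_le hax
    · rw [if_neg hax] at hxi
      exact absurd rfl hxi

lemma yz_eq (j : Fin f) : yv 𝔽 f j * zv 𝔽 f j = monomial (Ee f j) (1 : 𝔽) := by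
  have h1 : yv 𝔽 f j = monomial (Finsupp.single (Sum.inl j) 1) (1 : 𝔽) := rfl
  have h2 : zv 𝔽 f j = monomial (Finsupp.single (Sum.inr j) 1) (1 : 𝔽) := rfl
  rw [h1, h2, monomial_mul, one_mul, Ee]

lemma Irel_eq : Irel 𝔽 f = Ideal.span ((fun e => monomial e (1 : 𝔽)) '' Set.range (Ee f)) := by
  unfold Irel
  rw [← Set.range_comp]
  congr 1
  ext p
  constructor
  · rintro ⟨j, rfl⟩; exact ⟨j, (yz_eq j).symm⟩
  · rintro ⟨j, rfl⟩; exact ⟨j, yz_eq j⟩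

lemma prod_monomial {ι : Type*} (S : Finset ι) (g : ι → ((Fin f ⊕ Fin f) →₀ ℕ)) :
    (∏ j ∈ S, monomial (g j) (1 : 𝔽)) = monomial (∑ j ∈ S, g j) (1 : 𝔽) := by
  classical
  induction S using Finset.induction_on with
  | empty => simp [monomial_zero', C_1]
  | insert _ _ hj ih =>
      rw [Finset.prod_insert hj, Finset.sum_insert hj, ih, monomial_mul, one_mul]

variable {s u' : Fin f → ((Fin f ⊕ Fin f) →₀ ℕ)}

lemma lemA (h : IsYZ s u') (x : PolyR 𝔽 f) :
    (∀ j, monomial (s j) (1 : 𝔽) * x ∈ Irel 𝔽 f) ↔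
      x ∈ Ideal.span {monomial (∑ j, u' j) (1 : 𝔽)} ⊔ Irel 𝔽 f := by
  have l1 : (∀ j, monomial (s j) (1 : 𝔽) * x ∈ Irel 𝔽 f) ↔
      ∀ m ∈ x.support, ∀ j, ∃ k, Ee f k ≤ s j + m := by
    simp_rw [Irel_eq, monomial_mul_mem_span]
    constructor
    · intro hj m hm j
      obtain ⟨e, ⟨k, rfl⟩, hle⟩ := hj j m hm
      exact ⟨k, hle⟩
    · intro hm j m hms
      obtain ⟨k, hk⟩ := hm m hms j
      exact ⟨_, ⟨k, rfl⟩, hk⟩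
  have hR : Ideal.span {monomial (∑ j, u' j) (1 : 𝔽)} ⊔ Irel 𝔽 f =
      Ideal.span ((fun e => monomial e (1 : 𝔽)) '' insert (∑ j, u' j) (Set.range (Ee f))) := by
    rw [Irel_eq, ← Ideal.span_union, Set.image_insert_eq, Set.insert_eq]
  have l2 : x ∈ Ideal.span {monomial (∑ j, u' j) (1 : 𝔽)} ⊔ Irel 𝔽 f ↔
      ∀ m ∈ x.support, ((∑ j, u' j) ≤ m ∨ ∃ k, Ee f k ≤ m) := by
    rw [hR, mem_ideal_span_monomial_image]
    refine forall₂_congr fun m _ => ?_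
    constructor
    · rintro ⟨e, he, hle⟩
      rcases Set.mem_insert_iff.mp he with rfl | ⟨k, rfl⟩
      · exact Or.inl hle
      · exact Or.inr ⟨k, hle⟩
    · rintro (hU | ⟨k, hk⟩)
      · exact ⟨_, Set.mem_insert _ _, hU⟩
      · exact ⟨_, Set.mem_insert_of_mem _ ⟨k, rfl⟩, hk⟩
  rw [l1, l2]
  exact forall₂_congr fun m _ => ann_exp h m

lemma lemB (h : IsYZ s u') (x : PolyR 𝔽 f) :
    monomial (∑ j, u' j) (1 : 𝔽) * x ∈ Irel 𝔽 f ↔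
      x ∈ Ideal.span (Set.range fun j => monomial (s j) (1 : 𝔽)) := by
  have hrs : (Set.range fun j => monomial (s j) (1 : 𝔽)) =
      (fun e => monomial e (1 : 𝔽)) '' Set.range s := by
    rw [← Set.range_comp]; rfl
  rw [Irel_eq, monomial_mul_mem_span, hrs, mem_ideal_span_monomial_image]
  refine forall₂_congr fun m _ => ?_
  constructor
  · rintro ⟨e, ⟨k, rfl⟩, hle⟩
    obtain ⟨k', hk'⟩ := (ker_exp h m).mp ⟨k, hle⟩
    exact ⟨_, ⟨k', rfl⟩, hk'⟩
  · rintro ⟨e, ⟨k, rfl⟩, hle⟩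
    obtain ⟨k', hk'⟩ := (ker_exp h m).mpr ⟨k, hle⟩
    exact ⟨_, ⟨k', rfl⟩, hk'⟩

end Poly

section General

variable {A : Type*} [CommRing A] {ι : Type*}

lemma gen_parta (g : ι → A) (w : A)
    (hann : ∀ x : A, (∀ j, g j * x = 0) ↔ x ∈ Ideal.span {w}) :
    Submodule.colon (⊥ : Ideal A) (Ideal.span (Set.range g)) = Ideal.span {w} := by
  ext x
  rw [Submodule.mem_colon, ← hann x]
  constructor
  · intro hc j
    have := hc (g j) (Ideal.subset_span ⟨j, rfl⟩)
    rwa [Submodule.mem_bot, smul_eq_mul, mul_comm] at this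
  · intro hj q hq
    rw [Submodule.mem_bot]
    induction hq using Submodule.span_induction with
    | mem q hmem => obtain ⟨j, rfl⟩ := hmem; rw [smul_eq_mul, mul_comm]; exact hj j
    | zero => simp
    | add a b _ _ ha hb => rw [smul_add, ha, hb, add_zero]
    | smul r a _ ha => rw [smul_comm, ha, smul_zero]

lemma gen_partb (g : ι → A) (w : A)
    (hker : ∀ x : A, w * x = 0 ↔ x ∈ Ideal.span (Set.range g)) :
    ∃ e : (A ⧸ Ideal.span (Set.range g)) ≃ₗ[A] ↥(Ideal.span {w}),
      ∀ x : A, (e (Submodule.Quotient.mk x) : A) = w * x := by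
  let φ : A →ₗ[A] A :=
    { toFun := fun ξ => w * ξ
      map_add' := fun a b => mul_add w a b
      map_smul' := fun c ξ => by simp only [smul_eq_mul, RingHom.id_apply]; ring }
  have hmemrange : ∀ ξ, φ ξ ∈ Ideal.span {w} := fun ξ =>
    Ideal.mem_span_singleton'.mpr ⟨ξ, mul_comm ξ w⟩
  let φ' : A →ₗ[A] ↥(Ideal.span {w}) :=
    LinearMap.codRestrict (Ideal.span {w}) φ hmemrange
  have hkerφ : ∀ x : A, φ' x = 0 ↔ x ∈ Ideal.span (Set.range g) := by
    intro x
    rw [← hker x, Subtype.ext_iff]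
    rfl
  have hle : Ideal.span (Set.range g) ≤ LinearMap.ker φ' := by
    intro ξ hξ
    have h9 : φ' ξ = 0 := (hkerφ ξ).mpr hξ
    exact h9
  let e0 := Submodule.liftQ (Ideal.span (Set.range g)) φ' hle
  have hinj : Function.Injective e0 := by
    rw [injective_iff_map_eq_zero]
    intro ξ hξ0
    obtain ⟨x, rfl⟩ := Submodule.Quotient.mk_surjective _ ξ
    rw [Submodule.liftQ_apply] at hξ0
    rw [Submodule.Quotient.mk_eq_zero]
    exact (hkerφ x).mp hξ0
  have hsurj : Function.Surjective e0 := by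
    rintro ⟨v, hv⟩
    obtain ⟨c, hc⟩ := Ideal.mem_span_singleton'.mp hv
    refine ⟨Submodule.Quotient.mk c, Subtype.ext ?_⟩
    rw [Submodule.liftQ_apply]
    show w * c = v
    rw [mul_comm]; exact hc
  refine ⟨LinearEquiv.ofBijective e0 ⟨hinj, hsurj⟩, fun x => ?_⟩
  show ((e0 (Submodule.Quotient.mk x) : ↥(Ideal.span {w})) : A) = w * x
  rw [Submodule.liftQ_apply]
  rfl

lemma gen_partc (g : ι → A)
    (E : ↥(Submodule.colon (⊥ : Ideal A) (Ideal.span (Set.range g))) ≃ₗ[A]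
      (A ⧸ Ideal.span (Set.range g))) :
    Nonempty (((A ⧸ Ideal.span (Set.range g)) →ₗ[A] A) ≃ₗ[A]
      (A ⧸ Ideal.span (Set.range g))) := by
  set 𝔞 := Ideal.span (Set.range g) with h𝔞
  let Φ : ((A ⧸ 𝔞) →ₗ[A] A) →ₗ[A] A :=
    { toFun := fun ψ => ψ (Submodule.Quotient.mk 1)
      map_add' := fun ψ χ => rfl
      map_smul' := fun c ψ => rfl }
  have hone : ∀ q : A, (Submodule.Quotient.mk q : A ⧸ 𝔞)
      = q • (Submodule.Quotient.mk 1 : A ⧸ 𝔞) := by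
    intro q
    rw [← Submodule.Quotient.mk_smul, smul_eq_mul, mul_one]
  have hΦmem : ∀ ψ, Φ ψ ∈ Submodule.colon (⊥ : Ideal A) 𝔞 := by
    intro ψ
    rw [Submodule.mem_colon]
    intro q hq
    have h0 : q • (Submodule.Quotient.mk 1 : A ⧸ 𝔞) = 0 := by
      rw [← hone, Submodule.Quotient.mk_eq_zero]
      exact hq
    rw [Submodule.mem_bot, smul_eq_mul, mul_comm, ← smul_eq_mul]
    show q • ψ (Submodule.Quotient.mk 1) = 0
    rw [← ψ.map_smul, h0, map_zero]
  let Φ' : ((A ⧸ 𝔞) →ₗ[A] A) →ₗ[A] ↥(Submodule.colon (⊥ : Ideal A) 𝔞) :=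
    LinearMap.codRestrict _ Φ hΦmem
  have hinj2 : Function.Injective Φ' := by
    rw [injective_iff_map_eq_zero]
    intro ψ h0
    have hψ1 : ψ (Submodule.Quotient.mk 1) = 0 := Subtype.ext_iff.mp h0
    refine LinearMap.ext fun ξ => ?_
    obtain ⟨q, rfl⟩ := Submodule.Quotient.mk_surjective _ ξ
    rw [hone q, map_smul, hψ1, smul_zero]
    rfl
  have hsurj2 : Function.Surjective Φ' := by
    rintro ⟨v, hv⟩
    rw [Submodule.mem_colon] at hv
    let ψv : A →ₗ[A] A :=
      { toFun := fun ξ => v * ξ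
        map_add' := fun a b => mul_add v a b
        map_smul' := fun c ξ => by simp only [smul_eq_mul, RingHom.id_apply]; ring }
    have hlev : 𝔞 ≤ LinearMap.ker ψv := by
      intro q hq
      have h9 : ψv q = 0 := by
        show v * q = 0
        have := hv q hq
        rwa [smul_eq_mul, Submodule.mem_bot] at this
      exact h9
    refine ⟨Submodule.liftQ 𝔞 ψv hlev, Subtype.ext ?_⟩
    show (Submodule.liftQ 𝔞 ψv hlev) (Submodule.Quotient.mk 1) = v
    rw [Submodule.liftQ_apply]
    show v * 1 = v
    rw [mul_one]
  exact ⟨(LinearEquiv.ofBijective Φ' ⟨hinj2, hsurj2⟩) ≪≫ₗ E⟩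

end General

/-- (eq:isom-barR) in Proposition `prop:Ext-R/I`, §3.3.1.
(a) The annihilator `R̄[𝔞] = {x ∈ R̄ : 𝔞·x = 0}` equals the principal ideal `t'·R̄`, and
multiplication by `t'` gives an `R̄`-module isomorphism `R̄/𝔞R̄ ≅ t'·R̄`;
(b) consequently `Hom_{R̄}(R/𝔞, R̄) ≅ R/𝔞` (as `R̄`-modules, hence as `R`-modules). -/
theorem statement17 (𝔽 : Type*) [Field 𝔽] (f : ℕ) (hf : 1 ≤ f)
    (t u : Fin f → PolyR 𝔽 f)
    (htu : ∀ j, (t j = yv 𝔽 f j ∧ u j = zv 𝔽 f j) ∨ (t j = zv 𝔽 f j ∧ u j = yv 𝔽 f j) ∨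
      (t j = yv 𝔽 f j * zv 𝔽 f j ∧ u j = 1)) :
    (Submodule.colon (⊥ : Ideal (RBar 𝔽 f))
        (Ideal.span (Set.range fun j => Ideal.Quotient.mk (Irel 𝔽 f) (t j)))
      = Ideal.span {Ideal.Quotient.mk (Irel 𝔽 f) (∏ j, u j)}) ∧
    (∃ e : (RBar 𝔽 f ⧸ Ideal.span (Set.range fun j => Ideal.Quotient.mk (Irel 𝔽 f) (t j)))
          ≃ₗ[RBar 𝔽 f] ↥(Ideal.span {Ideal.Quotient.mk (Irel 𝔽 f) (∏ j, u j)}),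
      ∀ x : RBar 𝔽 f,
        (e (Submodule.Quotient.mk x) : RBar 𝔽 f)
          = Ideal.Quotient.mk (Irel 𝔽 f) (∏ j, u j) * x) ∧
    Nonempty
      (((RBar 𝔽 f ⧸ Ideal.span (Set.range fun j => Ideal.Quotient.mk (Irel 𝔽 f) (t j)))
          →ₗ[RBar 𝔽 f] RBar 𝔽 f)
        ≃ₗ[RBar 𝔽 f]
        (RBar 𝔽 f ⧸ Ideal.span (Set.range fun j => Ideal.Quotient.mk (Irel 𝔽 f) (t j)))) := by
  classical
  -- extract the exponents of `t j` and `u j`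
  have key : ∀ j, ∃ p : ((Fin f ⊕ Fin f) →₀ ℕ) × ((Fin f ⊕ Fin f) →₀ ℕ),
      t j = monomial p.1 1 ∧ u j = monomial p.2 1 ∧
      ((p.1 = Finsupp.single (Sum.inl j) 1 ∧ p.2 = Finsupp.single (Sum.inr j) 1) ∨
       (p.1 = Finsupp.single (Sum.inr j) 1 ∧ p.2 = Finsupp.single (Sum.inl j) 1) ∨
       (p.1 = Ee f j ∧ p.2 = 0)) := by
    intro j
    rcases htu j with ⟨h1, h2⟩ | ⟨h1, h2⟩ | ⟨h1, h2⟩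
    · exact ⟨(Finsupp.single (Sum.inl j) 1, Finsupp.single (Sum.inr j) 1),
        by rw [h1]; rfl, by rw [h2]; rfl, Or.inl ⟨rfl, rfl⟩⟩
    · exact ⟨(Finsupp.single (Sum.inr j) 1, Finsupp.single (Sum.inl j) 1),
        by rw [h1]; rfl, by rw [h2]; rfl, Or.inr (Or.inl ⟨rfl, rfl⟩)⟩
    · exact ⟨(Ee f j, 0),
        by rw [h1, yz_eq], by rw [h2, monomial_zero', C_1], Or.inr (Or.inr ⟨rfl, rfl⟩)⟩
  choose p hp1 hp2 hp3 using key
  set s : Fin f → ((Fin f ⊕ Fin f) →₀ ℕ) := fun j => (p j).1 with hs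
  set u' : Fin f → ((Fin f ⊕ Fin f) →₀ ℕ) := fun j => (p j).2 with hu'
  have hsu : IsYZ s u' := hp3
  have hprod : (∏ j, u j) = monomial (∑ j, u' j) (1 : 𝔽) := by
    rw [Finset.prod_congr rfl fun j _ => hp2 j, prod_monomial]
  -- `R`-level annihilator and kernel computations
  have hAnn : ∀ x : PolyR 𝔽 f, (∀ j, t j * x ∈ Irel 𝔽 f) ↔
      x ∈ Ideal.span {∏ j, u j} ⊔ Irel 𝔽 f := by
    intro x
    rw [hprod]
    simp_rw [hp1]
    exact lemA hsu x
  have hKer : ∀ x : PolyR 𝔽 f, (∏ j, u j) * x ∈ Irel 𝔽 f ↔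
      x ∈ Ideal.span (Set.range t) := by
    intro x
    rw [hprod]
    have ht : t = fun j => monomial (s j) (1 : 𝔽) := funext hp1
    rw [ht]
    exact lemB hsu x
  -- quotient-level translations
  have hIle : Irel 𝔽 f ≤ Ideal.span (Set.range t) := by
    rw [Irel]
    refine Ideal.span_le.mpr ?_
    rintro q ⟨j, rfl⟩
    show yv 𝔽 f j * zv 𝔽 f j ∈ _
    have : yv 𝔽 f j * zv 𝔽 f j = t j * u j := by
      rcases htu j with ⟨h1, h2⟩ | ⟨h1, h2⟩ | ⟨h1, h2⟩ <;> rw [h1, h2] <;> ring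
    rw [this]
    exact Ideal.mul_mem_right _ _ (Ideal.subset_span ⟨j, rfl⟩)
  set π := Ideal.Quotient.mk (Irel 𝔽 f) with hπ
  set abar := Ideal.span (Set.range fun j => π (t j)) with habardef
  have habar : ∀ x : PolyR 𝔽 f, π x ∈ abar ↔ x ∈ Ideal.span (Set.range t) := by
    intro x
    have hmap : abar = Ideal.map π (Ideal.span (Set.range t)) := by
      rw [habardef, Ideal.map_span, ← Set.range_comp]; rfl
    rw [hmap, Ideal.mem_quotient_iff_mem_sup, sup_eq_left.mpr hIle]
  have hspan' : ∀ x : PolyR 𝔽 f, π x ∈ Ideal.span {π (∏ j, u j)} ↔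
      x ∈ Ideal.span {∏ j, u j} ⊔ Irel 𝔽 f := by
    intro x
    have hmap : Ideal.span {π (∏ j, u j)} = Ideal.map π (Ideal.span {∏ j, u j}) := by
      rw [Ideal.map_span, Set.image_singleton]
    rw [hmap, Ideal.mem_quotient_iff_mem_sup]
  -- the two ring-level facts in `RBar`
  have F1 : ∀ ξ : RBar 𝔽 f, (∀ j, π (t j) * ξ = 0) ↔
      ξ ∈ Ideal.span {π (∏ j, u j)} := by
    intro ξ
    obtain ⟨x, rfl⟩ := Ideal.Quotient.mk_surjective ξ
    rw [hspan', ← hAnn x]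
    refine forall_congr' fun j => ?_
    rw [← map_mul, Ideal.Quotient.eq_zero_iff_mem]
  have F2 : ∀ ξ : RBar 𝔽 f, π (∏ j, u j) * ξ = 0 ↔ ξ ∈ abar := by
    intro ξ
    obtain ⟨x, rfl⟩ := Ideal.Quotient.mk_surjective ξ
    rw [habar, ← hKer x, ← map_mul, Ideal.Quotient.eq_zero_iff_mem]
  -- assemble
  have parta : Submodule.colon (⊥ : Ideal (RBar 𝔽 f)) abar
      = Ideal.span {π (∏ j, u j)} :=
    gen_parta (fun j => π (t j)) (π (∏ j, u j)) F1
  obtain ⟨e, he⟩ := gen_partb (A := RBar 𝔽 f) (fun j => π (t j)) (π (∏ j, u j)) F2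
  refine ⟨parta, ⟨e, he⟩, ?_⟩
  exact gen_partc (fun j => π (t j))
    ((LinearEquiv.ofEq _ _ parta) ≪≫ₗ e.symm)

end BHHMS
end
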